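/- arXiv:1902.11047 — 13 statements merged into one kernel-verified Lean document; each statement's English description precedes it below -/
import Mathlib

section
/- Every MWSR flow is a maximum flow: if a feasible flow f minimizes ∑_{j∈A} e_j (r_j^f)² among all feasible flows, then the value of f is maximal among all feasible flows. -/
open Finset
open scoped Classical

variable {S A : Type*} [Fintype S] [Fintype A]

/-- A feasible flow: nonnegative on edges, zero off edges, outflow of each security
bounded by its value, inflow of each account bounded by its exposure. -/
def Feasible (E : Finset (S × A)) (v : S → ℝ) (e : A → ℝ) (f : S → A → ℝ) : Prop :=
  (∀ i j, (i, j) ∈ E → 0 ≤ f i j) ∧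
  (∀ i j, (i, j) ∉ E → f i j = 0) ∧
  (∀ i : S, ∑ j ∈ Finset.univ.filter (fun j => (i, j) ∈ E), f i j ≤ v i) ∧
  (∀ j : A, ∑ i ∈ Finset.univ.filter (fun i => (i, j) ∈ E), f i j ≤ e j)

/-- The value of a flow: total flow on all edges. -/
noncomputable def flowValue (E : Finset (S × A)) (f : S → A → ℝ) : ℝ :=
  ∑ p ∈ E, f p.1 p.2

/-- The risk ratio of account `j` under a flow `f`. -/
noncomputable def riskRatio (E : Finset (S × A)) (e : A → ℝ) (f : S → A → ℝ) (j : A) : ℝ :=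
  (e j - ∑ i ∈ Finset.univ.filter (fun i => (i, j) ∈ E), f i j) / e j

/-- A maximum flow: feasible, with value maximal among feasible flows. -/
def IsMaxFlow (E : Finset (S × A)) (v : S → ℝ) (e : A → ℝ) (f : S → A → ℝ) : Prop :=
  Feasible E v e f ∧ ∀ g : S → A → ℝ, Feasible E v e g → flowValue E g ≤ flowValue E f

/-- The ratio constraint: if `f` sends positive flow from `i` to `j` and `i` could
also be used for `l`, then the risk ratio of `j` is at least that of `l`. -/
def RatioConstraint (E : Finset (S × A)) (e : A → ℝ) (f : S → A → ℝ) : Prop :=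
  ∀ i j l, (i, j) ∈ E → 0 < f i j → (i, l) ∈ E →
    riskRatio E e f l ≤ riskRatio E e f j

/-- A ratio-balanced (maximum) flow. -/
def RatioBalanced (E : Finset (S × A)) (v : S → ℝ) (e : A → ℝ) (f : S → A → ℝ) : Prop :=
  IsMaxFlow E v e f ∧ RatioConstraint E e f

/-- The weighted sum of squared risk ratios `∑ j, e j * (r_j^f)^2`. -/
noncomputable def objective (E : Finset (S × A)) (e : A → ℝ) (f : S → A → ℝ) : ℝ :=
  ∑ j : A, e j * (riskRatio E e f j) ^ 2

/-- An MWSR flow: a feasible flow minimizing the weighted sum of squared risk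
ratios among all feasible flows. -/
def MWSR (E : Finset (S × A)) (v : S → ℝ) (e : A → ℝ) (f : S → A → ℝ) : Prop :=
  Feasible E v e f ∧ ∀ g : S → A → ℝ, Feasible E v e g → objective E e f ≤ objective E e g

/- ### auxiliary machinery -/


noncomputable def outF (E : Finset (S × A)) (f : S → A → ℝ) (i : S) : ℝ :=
  ∑ j ∈ Finset.univ.filter (fun j => (i, j) ∈ E), f i j

noncomputable def inF (E : Finset (S × A)) (f : S → A → ℝ) (j : A) : ℝ :=
  ∑ i ∈ Finset.univ.filter (fun i => (i, j) ∈ E), f i j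

lemma sum_out_eq (E : Finset (S × A)) (φ : S → A → ℝ) (T : Finset S) :
    ∑ i ∈ T, outF E φ i = ∑ p ∈ E, if p.1 ∈ T then φ p.1 p.2 else 0 := by
  classical
  have h1 : ∑ i ∈ T, outF E φ i
      = ∑ i : S, ∑ j : A, if i ∈ T then (if (i, j) ∈ E then φ i j else 0) else 0 := by
    rw [show (T : Finset S) = Finset.univ ∩ T by simp, ← Finset.sum_ite_mem]
    refine Finset.sum_congr rfl fun i _ => ?_
    by_cases hT : i ∈ T <;> simp [hT, outF, Finset.sum_filter]
  rw [h1, ← Finset.sum_product']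
  rw [show (E : Finset (S × A)) = Finset.univ ∩ E by simp, ← Finset.sum_ite_mem]
  rw [← Finset.univ_product_univ]
  refine Finset.sum_congr rfl fun p _ => ?_
  by_cases hE : p ∈ E <;> by_cases hT : p.1 ∈ T <;> simp [hE, hT]

lemma sum_in_eq (E : Finset (S × A)) (φ : S → A → ℝ) (U : Finset A) :
    ∑ j ∈ U, inF E φ j = ∑ p ∈ E, if p.2 ∈ U then φ p.1 p.2 else 0 := by
  classical
  have h1 : ∑ j ∈ U, inF E φ j
      = ∑ j : A, ∑ i : S, if j ∈ U then (if (i, j) ∈ E then φ i j else 0) else 0 := by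
    rw [show (U : Finset A) = Finset.univ ∩ U by simp, ← Finset.sum_ite_mem]
    refine Finset.sum_congr rfl fun j _ => ?_
    by_cases hU : j ∈ U <;> simp [hU, inF, Finset.sum_filter]
  rw [h1, Finset.sum_comm, ← Finset.sum_product']
  rw [show (E : Finset (S × A)) = Finset.univ ∩ E by simp, ← Finset.sum_ite_mem]
  rw [← Finset.univ_product_univ]
  refine Finset.sum_congr rfl fun p _ => ?_
  by_cases hE : p ∈ E <;> by_cases hU : p.2 ∈ U <;> simp [hE, hU]

lemma out_add (E : Finset (S × A)) {i : S} {j0 : A} (hij : (i, j0) ∈ E) (c : ℝ)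
    (h : S → A → ℝ) (a : S) :
    outF E (fun a b => h a b + if a = i ∧ b = j0 then c else 0) a
      = outF E h a + if a = i then c else 0 := by
  classical
  unfold outF
  rw [Finset.sum_add_distrib]
  congr 1
  rcases eq_or_ne a i with rfl | hne
  · simp [Finset.sum_ite_eq', hij]
  · simp [hne]

lemma in_add (E : Finset (S × A)) {i : S} {j0 : A} (hij : (i, j0) ∈ E) (c : ℝ)
    (h : S → A → ℝ) (b : A) :
    inF E (fun a b => h a b + if a = i ∧ b = j0 then c else 0) b
      = inF E h b + if b = j0 then c else 0 := by
  classical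
  unfold inF
  rw [Finset.sum_add_distrib]
  congr 1
  rcases eq_or_ne b j0 with rfl | hne
  · simp [Finset.sum_ite_eq', hij]
  · simp [hne]

/-- `Qprop i`: for all sufficiently small ε, we can reroute flow so that inflows are
unchanged but security `i` has ε residual capacity, while decreasing flows by at most C·ε. -/
def Qprop (E : Finset (S × A)) (v : S → ℝ) (e : A → ℝ) (f : S → A → ℝ) (i : S) : Prop :=
  ∃ ε : ℝ, 0 < ε ∧ ∃ C : ℝ, 0 ≤ C ∧ ∀ ε' : ℝ, 0 < ε' → ε' ≤ ε →
    ∃ h : S → A → ℝ, Feasible E v e h ∧ (∀ j, inF E h j = inF E f j) ∧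
      outF E h i ≤ v i - ε' ∧ ∀ a b, f a b - C * ε' ≤ h a b

lemma Qbase (E : Finset (S × A)) (v : S → ℝ) (e : A → ℝ) (f : S → A → ℝ)
    (hf : Feasible E v e f) {i : S} (hi : outF E f i < v i) : Qprop E v e f i :=
  ⟨v i - outF E f i, by linarith, 0, le_refl 0, fun ε' _ h2 =>
    ⟨f, hf, fun _ => rfl, by linarith, fun a b => by simp⟩⟩

lemma Qstep (E : Finset (S × A)) (v : S → ℝ) (e : A → ℝ) (f : S → A → ℝ)
    {i i' : S} {j0 : A} (hQ : Qprop E v e f i)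
    (hij : (i, j0) ∈ E) (hi'j : (i', j0) ∈ E) (hpos : 0 < f i' j0) :
    Qprop E v e f i' := by
  classical
  obtain ⟨ε, hε, C, hC, hP⟩ := hQ
  refine ⟨min ε (f i' j0 / (C + 1)), lt_min hε (div_pos hpos (by linarith)),
    C + 1, by linarith, fun ε' hε'0 hε'le => ?_⟩
  obtain ⟨h, hfeas, hin, hout, hlb⟩ := hP ε' hε'0 (le_trans hε'le (min_le_left _ _))
  have hε'2 : ε' ≤ f i' j0 / (C + 1) := le_trans hε'le (min_le_right _ _)
  have hprod : ε' * (C + 1) ≤ f i' j0 := (le_div_iff₀ (by linarith : (0:ℝ) < C + 1)).mp hε'2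
  have hlb' := hlb i' j0
  set h2 : S → A → ℝ := fun a b =>
    (h a b + if a = i ∧ b = j0 then ε' else 0) + if a = i' ∧ b = j0 then -ε' else 0 with hh2
  have hout2 : ∀ a, outF E h2 a
      = (outF E h a + if a = i then ε' else 0) + if a = i' then -ε' else 0 := by
    intro a
    rw [hh2, out_add E hi'j (-ε') (fun a b => h a b + if a = i ∧ b = j0 then ε' else 0) a,
      out_add E hij ε' h a]
  have hin2 : ∀ b, inF E h2 b = inF E h b := by
    intro b
    rw [hh2, in_add E hi'j (-ε') (fun a b => h a b + if a = i ∧ b = j0 then ε' else 0) b,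
      in_add E hij ε' h b]
    rcases eq_or_ne b j0 with rfl | hne
    · simp
    · simp [hne]
  refine ⟨h2, ⟨?_, ?_, ?_, ?_⟩, ?_, ?_, ?_⟩
  · -- nonneg on edges
    intro a b hab
    have h0 := hfeas.1 a b hab
    have hlbab := hlb a b
    show 0 ≤ (h a b + if a = i ∧ b = j0 then ε' else 0) + if a = i' ∧ b = j0 then -ε' else 0
    split_ifs with h1 h2' h2'
    · linarith
    · linarith
    · obtain ⟨rfl, rfl⟩ := h2'
      nlinarith
    · linarith
  · -- zero off edges
    intro a b hab
    have hz := hfeas.2.1 a b hab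
    have h1 : ¬(a = i ∧ b = j0) := fun ⟨ha, hb⟩ => hab (ha ▸ hb ▸ hij)
    have h2' : ¬(a = i' ∧ b = j0) := fun ⟨ha, hb⟩ => hab (ha ▸ hb ▸ hi'j)
    show (h a b + if a = i ∧ b = j0 then ε' else 0) + (if a = i' ∧ b = j0 then -ε' else 0) = 0
    rw [if_neg h1, if_neg h2']
    simpa using hz
  · -- outflow bound
    intro a
    show outF E h2 a ≤ v a
    rw [hout2 a]
    have hva := hfeas.2.2.1 a
    split_ifs with h1 h2' h3'
    · linarith [show outF E h a ≤ v a from hva]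
    · have hh := hout; rw [← h1] at hh; linarith
    · linarith [show outF E h a ≤ v a from hva]
    · linarith [show outF E h a ≤ v a from hva]
  · -- inflow bound
    intro b
    show inF E h2 b ≤ e b
    rw [hin2 b]
    exact hfeas.2.2.2 b
  · -- inflows unchanged
    intro j
    rw [hin2 j]; exact hin j
  · -- residual capacity at i'
    rw [hout2 i']
    rcases eq_or_ne i' i with rfl | hne
    · simp only [if_pos rfl]
      simp only [if_true]
      linarith
    · rw [if_neg hne, if_pos rfl]
      have := hfeas.2.2.1 i'
      show (outF E h i' + 0) + -ε' ≤ v i' - ε'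
      linarith [show outF E h i' ≤ v i' from this]
  · -- lower bound
    intro a b
    have := hlb a b
    show f a b - (C + 1) * ε' ≤ (h a b + if a = i ∧ b = j0 then ε' else 0) + if a = i' ∧ b = j0 then -ε' else 0
    split_ifs <;> linarith

lemma riskRatio_eq (E : Finset (S × A)) (e : A → ℝ) (φ : S → A → ℝ) (j : A) :
    riskRatio E e φ j = (e j - inF E φ j) / e j := rfl

lemma Qaug (E : Finset (S × A)) (v : S → ℝ) (e : A → ℝ) (he : ∀ j, 0 < e j)
    (f : S → A → ℝ) (hf : MWSR E v e f) {i : S} {j1 : A}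
    (hQ : Qprop E v e f i) (hij : (i, j1) ∈ E) (hslack : inF E f j1 < e j1) : False := by
  classical
  obtain ⟨ε, hε, C, hC, hP⟩ := hQ
  set ε' : ℝ := min ε (e j1 - inF E f j1) with hε'def
  have hε'0 : 0 < ε' := lt_min hε (by linarith)
  have hε'le : ε' ≤ ε := min_le_left _ _
  have hε'slack : ε' ≤ e j1 - inF E f j1 := min_le_right _ _
  obtain ⟨h, hfeas, hin, hout, hlb⟩ := hP ε' hε'0 hε'le
  set h2 : S → A → ℝ := fun a b => h a b + if a = i ∧ b = j1 then ε' else 0 with hh2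
  have hout2 : ∀ a, outF E h2 a = outF E h a + if a = i then ε' else 0 := fun a => by
    rw [hh2, out_add E hij ε' h a]
  have hin2 : ∀ b, inF E h2 b = inF E f b + if b = j1 then ε' else 0 := fun b => by
    rw [hh2, in_add E hij ε' h b, hin b]
  have hfeas2 : Feasible E v e h2 := by
    refine ⟨?_, ?_, ?_, ?_⟩
    · intro a b hab
      have h0 := hfeas.1 a b hab
      show 0 ≤ h a b + if a = i ∧ b = j1 then ε' else 0
      split_ifs <;> linarith
    · intro a b hab
      have hz := hfeas.2.1 a b hab
      have h1 : ¬(a = i ∧ b = j1) := fun ⟨ha, hb⟩ => hab (ha ▸ hb ▸ hij)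
      show h a b + (if a = i ∧ b = j1 then ε' else 0) = 0
      rw [if_neg h1]; simpa using hz
    · intro a
      show outF E h2 a ≤ v a
      rw [hout2 a]
      have hva := hfeas.2.2.1 a
      split_ifs with h1
      · have hh := hout; rw [← h1] at hh; linarith
      · linarith [show outF E h a ≤ v a from hva]
    · intro b
      show inF E h2 b ≤ e b
      rw [hin2 b]
      have hfb : inF E f b ≤ e b := hf.1.2.2.2 b
      split_ifs with h1
      · rw [h1]; linarith
      · linarith
  have hobj : objective E e h2 < objective E e f := by
    unfold objective
    apply Finset.sum_lt_sum
    · intro j _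
      rcases eq_or_ne j j1 with rfl | hne
      · have hr2 : riskRatio E e h2 j = (e j - (inF E f j + ε')) / e j := by
          rw [riskRatio_eq, hin2 j, if_pos rfl]
        have hr1 : riskRatio E e f j = (e j - inF E f j) / e j := riskRatio_eq E e f j
        rw [hr1, hr2]
        have hpos := he j
        have hnn : 0 ≤ (e j - (inF E f j + ε')) / e j :=
          div_nonneg (by linarith) (le_of_lt hpos)
        have hlt : (e j - (inF E f j + ε')) / e j < (e j - inF E f j) / e j := by
          rw [div_lt_div_iff₀ hpos hpos]; nlinarith
        exact le_of_lt (mul_lt_mul_of_pos_left (pow_lt_pow_left₀ hlt hnn two_ne_zero) hpos)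
      · have hr2 : riskRatio E e h2 j = riskRatio E e f j := by
          rw [riskRatio_eq, riskRatio_eq, hin2 j, if_neg hne]
          ring_nf
        rw [hr2]
    · refine ⟨j1, Finset.mem_univ _, ?_⟩
      have hr2 : riskRatio E e h2 j1 = (e j1 - (inF E f j1 + ε')) / e j1 := by
        rw [riskRatio_eq, hin2 j1, if_pos rfl]
      have hr1 : riskRatio E e f j1 = (e j1 - inF E f j1) / e j1 := riskRatio_eq E e f j1
      rw [hr1, hr2]
      have hpos := he j1
      have hnn : 0 ≤ (e j1 - (inF E f j1 + ε')) / e j1 :=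
        div_nonneg (by linarith) (le_of_lt hpos)
      have hlt : (e j1 - (inF E f j1 + ε')) / e j1 < (e j1 - inF E f j1) / e j1 := by
        rw [div_lt_div_iff₀ hpos hpos]; nlinarith
      have := mul_lt_mul_of_pos_left (pow_lt_pow_left₀ hlt hnn two_ne_zero) hpos
      exact this
  linarith [hf.2 h2 hfeas2]

/-- Every MWSR flow is a maximum flow. -/
theorem mwsr_isMaxFlow (E : Finset (S × A)) (v : S → ℝ) (e : A → ℝ)
    (hv : ∀ i, 0 ≤ v i) (he : ∀ j, 0 < e j)
    (f : S → A → ℝ) (hf : MWSR E v e f) :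
    IsMaxFlow E v e f := by
  classical
  refine ⟨hf.1, fun g hg => ?_⟩
  by_contra hcon
  push_neg at hcon
  set R : Finset S := Finset.univ.filter (fun i => Qprop E v e f i) with hRdef
  set B : Finset A := Finset.univ.filter (fun j => ∃ i ∈ R, (i, j) ∈ E) with hBdef
  have hRmem : ∀ i : S, i ∈ R ↔ Qprop E v e f i := fun i => by simp [hRdef]
  have hBmem : ∀ j : A, j ∈ B ↔ ∃ i ∈ R, (i, j) ∈ E := fun j => by simp [hBdef]
  have hgout : ∀ i, outF E g i ≤ v i := hg.2.2.1
  have hgin : ∀ j, inF E g j ≤ e j := hg.2.2.2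
  have hbase : ∀ i : S, outF E f i < outF E g i → i ∈ R := fun i hi =>
    (hRmem i).mpr (Qbase E v e f hf.1 (lt_of_lt_of_le hi (hgout i)))
  have hnR : ∀ i : S, i ∉ R → outF E g i ≤ outF E f i := by
    intro i hi
    by_contra hlt
    push_neg at hlt
    exact hi (hbase i hlt)
  have hsat : ∀ j ∈ B, inF E f j = e j := by
    intro j hj
    obtain ⟨i, hiR, hij⟩ := (hBmem j).mp hj
    by_contra hne
    exact Qaug E v e he f hf ((hRmem i).mp hiR) hij
      (lt_of_le_of_ne (hf.1.2.2.2 j) hne)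
  have hRB : ∀ p ∈ E, p.1 ∈ R → p.2 ∈ B := fun p hp h1 =>
    (hBmem p.2).mpr ⟨p.1, h1, by simpa using hp⟩
  have hBR : ∀ p ∈ E, p.2 ∈ B → 0 < f p.1 p.2 → p.1 ∈ R := by
    intro p hp hB hpos
    obtain ⟨i, hiR, hij⟩ := (hBmem p.2).mp hB
    exact (hRmem p.1).mpr (Qstep E v e f ((hRmem i).mp hiR) hij (by simpa using hp) hpos)
  have key1 : ∑ i ∈ R, outF E f i = ∑ j ∈ B, inF E f j := by
    rw [sum_out_eq, sum_in_eq]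
    refine Finset.sum_congr rfl fun p hp => ?_
    by_cases h1 : p.1 ∈ R
    · rw [if_pos h1, if_pos (hRB p hp h1)]
    · rw [if_neg h1]
      by_cases h2 : p.2 ∈ B
      · rw [if_pos h2]
        rcases lt_or_eq_of_le (hf.1.1 p.1 p.2 (by simpa using hp)) with hlt | heq
        · exact absurd (hBR p hp h2 hlt) h1
        · exact heq
      · rw [if_neg h2]
  have key2 : ∑ i ∈ R, outF E g i ≤ ∑ j ∈ B, inF E g j := by
    rw [sum_out_eq, sum_in_eq]
    refine Finset.sum_le_sum fun p hp => ?_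
    by_cases h1 : p.1 ∈ R
    · rw [if_pos h1, if_pos (hRB p hp h1)]
    · rw [if_neg h1]
      by_cases h2 : p.2 ∈ B
      · rw [if_pos h2]; exact hg.1 p.1 p.2 (by simpa using hp)
      · rw [if_neg h2]
  have key3 : ∑ j ∈ B, inF E g j ≤ ∑ j ∈ B, inF E f j := by
    rw [show ∑ j ∈ B, inF E f j = ∑ j ∈ B, e j from Finset.sum_congr rfl hsat]
    exact Finset.sum_le_sum fun j _ => hgin j
  have keyc : ∑ i ∈ Rᶜ, outF E g i ≤ ∑ i ∈ Rᶜ, outF E f i :=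
    Finset.sum_le_sum fun i hi => hnR i (Finset.mem_compl.mp hi)
  have hval : ∀ φ : S → A → ℝ, flowValue E φ = ∑ i : S, outF E φ i := by
    intro φ
    rw [sum_out_eq]
    simp [flowValue]
  have hsplit : ∀ φ : S → A → ℝ,
      ∑ i ∈ R, outF E φ i + ∑ i ∈ Rᶜ, outF E φ i = ∑ i : S, outF E φ i :=
    fun φ => Finset.sum_add_sum_compl R _
  have := hval g
  have := hval f
  have := hsplit g
  have := hsplit f
  linarith
end

section
/- Every MWSR flow satisfies the ratio constraint: if a feasible flow f minimizes ∑_{j∈A} e_j (r_j^f)² among all feasible flows, then whenever (i,j) ∈ E, f_{ij} > 0 and (i,ℓ) ∈ E, one has r_j^f ≥ r_ℓ^f. -/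
open Finset
open scoped Classical

variable {S A : Type*} [Fintype S] [Fintype A]

/-- Every MWSR flow satisfies the ratio constraint. -/
theorem mwsr_ratioConstraint (E : Finset (S × A)) (v : S → ℝ) (e : A → ℝ)
    (hv : ∀ i, 0 ≤ v i) (he : ∀ j, 0 < e j)
    (f : S → A → ℝ) (hf : MWSR E v e f) :
    RatioConstraint E e f := by
  obtain ⟨⟨hpos, hoff, hout, hin⟩, hmin⟩ := hf
  intro i j l hij hfij hil
  by_contra hlt
  push_neg at hlt
  have hej := he j
  have hel := he l
  set Fj := ∑ a ∈ Finset.univ.filter (fun a => (a, j) ∈ E), f a j with hFjdef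
  set Fl := ∑ a ∈ Finset.univ.filter (fun a => (a, l) ∈ E), f a l with hFldef
  have hrj : riskRatio E e f j = (e j - Fj) / e j := rfl
  have hrl : riskRatio E e f l = (e l - Fl) / e l := rfl
  have hFj_le : Fj ≤ e j := hin j
  have hrj0 : 0 ≤ riskRatio E e f j := by
    rw [hrj]; exact div_nonneg (by linarith) hej.le
  have hrl0 : 0 < riskRatio E e f l := lt_of_le_of_lt hrj0 hlt
  have hDl : 0 < e l - Fl := by
    have h := mul_pos hrl0 hel
    rw [hrl, div_mul_cancel₀ _ (ne_of_gt hel)] at h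
    exact h
  have hjl : j ≠ l := by
    intro h; rw [h] at hlt; exact lt_irrefl _ hlt
  have hd : 0 < 1 / e j + 1 / e l := by positivity
  set ε := min (f i j) (min (e l - Fl)
      ((riskRatio E e f l - riskRatio E e f j) / (1 / e j + 1 / e l))) with hεdef
  have hεpos : 0 < ε := by
    refine lt_min hfij (lt_min hDl ?_)
    exact div_pos (by linarith) hd
  have hε1 : ε ≤ f i j := min_le_left _ _
  have hε2 : ε ≤ e l - Fl := le_trans (min_le_right _ _) (min_le_left _ _)
  have hε3 : ε ≤ (riskRatio E e f l - riskRatio E e f j) / (1 / e j + 1 / e l) :=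
    le_trans (min_le_right _ _) (min_le_right _ _)
  set g : S → A → ℝ := fun a b =>
    f a b + ((if (a, b) = (i, l) then ε else 0) - (if (a, b) = (i, j) then ε else 0)) with hgdef
  -- sum helpers
  have sumA : ∀ (T : Finset A) (a : S) (c : A),
      ∑ b ∈ T, ((if (a, b) = (i, c) then ε else 0) : ℝ)
        = if a = i ∧ c ∈ T then ε else 0 := by
    intro T a c
    by_cases ha : a = i
    · subst ha
      simp only [Prod.mk.injEq, true_and]
      rw [Finset.sum_ite_eq' T c (fun _ => ε)]
    · simp [Prod.mk.injEq, ha]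
  have sumS : ∀ (T : Finset S) (b c : A),
      ∑ a ∈ T, ((if (a, b) = (i, c) then ε else 0) : ℝ)
        = if b = c ∧ i ∈ T then ε else 0 := by
    intro T b c
    by_cases hb : b = c
    · subst hb
      simp only [Prod.mk.injEq, and_true]
      rw [Finset.sum_ite_eq' T i (fun _ => ε)]
      simp
    · simp [Prod.mk.injEq, hb]
  -- inflow formula for g
  have hG : ∀ b : A, ∑ a ∈ Finset.univ.filter (fun a => (a, b) ∈ E), g a b
      = (∑ a ∈ Finset.univ.filter (fun a => (a, b) ∈ E), f a b)
        + ((if b = l then ε else 0) - (if b = j then ε else 0)) := by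
    intro b
    simp only [hgdef, Finset.sum_add_distrib, Finset.sum_sub_distrib, sumS]
    by_cases hbl : b = l
    · subst hbl
      have hi : i ∈ Finset.univ.filter (fun a => (a, b) ∈ E) := by
        simp [Finset.mem_filter, hil]
      simp [hi, Ne.symm (hjl : j ≠ b)]
    · by_cases hbj : b = j
      · subst hbj
        have hi : i ∈ Finset.univ.filter (fun a => (a, b) ∈ E) := by
          simp [Finset.mem_filter, hij]
        simp [hi, hbl]
      · simp [hbl, hbj]
  -- feasibility of g
  have hfeasg : Feasible E v e g := by
    refine ⟨?_, ?_, ?_, ?_⟩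
    · intro a b hab
      have h0 := hpos a b hab
      simp only [hgdef]
      by_cases h1 : (a, b) = (i, l)
      · have h2 : (a, b) ≠ (i, j) := by
          rw [h1]; simp [Ne.symm hjl]
        rw [if_pos h1, if_neg h2]
        linarith [hεpos]
      · by_cases h2 : (a, b) = (i, j)
        · have ha : a = i := congrArg Prod.fst h2
          have hb : b = j := congrArg Prod.snd h2
          rw [if_neg h1, if_pos h2, ha, hb]
          linarith [hε1]
        · rw [if_neg h1, if_neg h2]
          linarith
    · intro a b hab
      have h1 : (a, b) ≠ (i, l) := by intro h; rw [h] at hab; exact hab hil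
      have h2 : (a, b) ≠ (i, j) := by intro h; rw [h] at hab; exact hab hij
      simp only [hgdef, if_neg h1, if_neg h2]
      rw [hoff a b hab]; ring
    · intro a
      have hexp : ∑ b ∈ Finset.univ.filter (fun b => (a, b) ∈ E), g a b
          = (∑ b ∈ Finset.univ.filter (fun b => (a, b) ∈ E), f a b)
            + ((if a = i ∧ l ∈ Finset.univ.filter (fun b => (a, b) ∈ E) then ε else 0)
              - (if a = i ∧ j ∈ Finset.univ.filter (fun b => (a, b) ∈ E) then ε else 0)) := by
        simp only [hgdef, Finset.sum_add_distrib, Finset.sum_sub_distrib, sumA]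
      rw [hexp]
      by_cases ha : a = i
      · subst ha
        have hl : l ∈ Finset.univ.filter (fun b => (a, b) ∈ E) := by
          simp [Finset.mem_filter, hil]
        have hj : j ∈ Finset.univ.filter (fun b => (a, b) ∈ E) := by
          simp [Finset.mem_filter, hij]
        simp only [hl, hj, and_true, if_pos rfl, true_and, if_true]
        have := hout a
        linarith
      · simp only [ha, false_and, if_false]
        have := hout a
        linarith
    · intro b
      rw [hG b]
      by_cases hbl : b = l
      · subst hbl
        rw [if_pos rfl, if_neg (fun h => hjl h.symm)]
        have := hin b
        linarith [hε2]
      · by_cases hbj : b = j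
        · subst hbj
          rw [if_neg hbl, if_pos rfl]
          have := hin b
          linarith [hεpos]
        · rw [if_neg hbl, if_neg hbj]
          have := hin b
          linarith
  -- risk ratios of g
  have hrg : ∀ b : A, riskRatio E e g b
      = (e b - ((∑ a ∈ Finset.univ.filter (fun a => (a, b) ∈ E), f a b)
        + ((if b = l then ε else 0) - (if b = j then ε else 0)))) / e b := by
    intro b
    rw [riskRatio, hG b]
  -- objective difference
  have hdiff : objective E e g - objective E e f
      = (e j * (riskRatio E e g j) ^ 2 - e j * (riskRatio E e f j) ^ 2)
        + (e l * (riskRatio E e g l) ^ 2 - e l * (riskRatio E e f l) ^ 2) := by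
    rw [objective, objective, ← Finset.sum_sub_distrib]
    rw [show (Finset.univ : Finset A) = Finset.univ from rfl]
    have hsub : ∑ b : A, (e b * (riskRatio E e g b) ^ 2 - e b * (riskRatio E e f b) ^ 2)
        = ∑ b ∈ ({j, l} : Finset A),
            (e b * (riskRatio E e g b) ^ 2 - e b * (riskRatio E e f b) ^ 2) := by
      refine (Finset.sum_subset (Finset.subset_univ _) ?_).symm
      intro b _ hb
      simp only [Finset.mem_insert, Finset.mem_singleton, not_or] at hb
      have : riskRatio E e g b = riskRatio E e f b := by
        rw [hrg b, riskRatio]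
        simp [hb.1, hb.2]
      rw [this]; ring
    rw [hsub, Finset.sum_pair hjl]
  have hgj : riskRatio E e g j = (e j - Fj + ε) / e j := by
    rw [hrg j, if_neg hjl, if_pos rfl]
    rw [← hFjdef]
    ring_nf
  have hgl : riskRatio E e g l = (e l - Fl - ε) / e l := by
    rw [hrg l, if_pos rfl, if_neg (fun h => hjl h.symm)]
    rw [← hFldef]
    ring_nf
  -- show objective strictly decreases
  have e3 : ε * (1 / e j + 1 / e l) ≤ (e l - Fl) / e l - (e j - Fj) / e j := by
    rw [← le_div_iff₀ hd]
    rw [hrl, hrj] at hε3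
    linarith
  have key : objective E e g - objective E e f < 0 := by
    rw [hdiff, hgj, hgl, hrj, hrl]
    have e1 : e j * ((e j - Fj + ε) / e j) ^ 2 - e j * ((e j - Fj) / e j) ^ 2
        = 2 * ε * ((e j - Fj) / e j) + ε ^ 2 * (1 / e j) := by
      field_simp; ring
    have e2 : e l * ((e l - Fl - ε) / e l) ^ 2 - e l * ((e l - Fl) / e l) ^ 2
        = -(2 * ε * ((e l - Fl) / e l)) + ε ^ 2 * (1 / e l) := by
      field_simp; ring
    rw [e1, e2]
    have h4 : ε ^ 2 * (1 / e j) + ε ^ 2 * (1 / e l) = ε * (ε * (1 / e j + 1 / e l)) := by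
      ring
    have h5 : ε * (ε * (1 / e j + 1 / e l)) ≤ ε * ((e l - Fl) / e l - (e j - Fj) / e j) :=
      mul_le_mul_of_nonneg_left e3 hεpos.le
    have h6 : ε * ((e j - Fj) / e j - (e l - Fl) / e l) < 0 := by
      apply mul_neg_of_pos_of_neg hεpos
      rw [hrj, hrl] at hlt
      linarith
    nlinarith [h4, h5, h6]
  have := hmin g hfeasg
  linarith
end

section
/- Every ratio-balanced maximum flow is MWSR: if a feasible flow f is a maximum flow and satisfies the ratio constraint, then f minimizes ∑_{j∈A} e_j (r_j^f)² among all feasible flows. -/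
open Finset
open scoped Classical

variable {S A : Type*} [Fintype S] [Fintype A]

/-- Every ratio-balanced maximum flow is MWSR. -/
theorem ratioBalanced_mwsr (E : Finset (S × A)) (v : S → ℝ) (e : A → ℝ)
    (hv : ∀ i, 0 ≤ v i) (he : ∀ j, 0 < e j)
    (f : S → A → ℝ) (hf : RatioBalanced E v e f) :
    MWSR E v e f := by
  obtain ⟨⟨⟨hf0, hfE, hfv, hfe⟩, hmax⟩, hratio⟩ := hf
  refine ⟨⟨hf0, hfE, hfv, hfe⟩, ?_⟩
  intro g hg
  obtain ⟨hg0, hgE, hgv, hge⟩ := hg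
  set r : A → ℝ := riskRatio E e f with hrdef
  set s : A → ℝ := riskRatio E e g with hsdef
  set F : A → ℝ := fun j => ∑ i ∈ Finset.univ.filter (fun i => (i, j) ∈ E), f i j with hFdef
  set G : A → ℝ := fun j => ∑ i ∈ Finset.univ.filter (fun i => (i, j) ∈ E), g i j with hGdef
  have hrnn : ∀ j, 0 ≤ r j := fun j =>
    div_nonneg (by have := hfe j; simp only [hFdef] at *; linarith) (he j).le
  -- Saturation: if security i is unsaturated, every adjacent account has zero risk ratio.
  have hsat : ∀ i j, (i, j) ∈ E →
      (∑ j' ∈ Finset.univ.filter (fun j' => (i, j') ∈ E), f i j') < v i → r j = 0 := by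
    intro i j hij hlt
    by_contra hne
    have hrpos : 0 < r j := lt_of_le_of_ne (hrnn j) (Ne.symm hne)
    have hFlt : F j < e j := by
      have h1 : 0 < (e j - F j) / e j := hrpos
      have h2 : 0 < e j - F j := by
        by_contra hc
        push_neg at hc
        have : (e j - F j) / e j ≤ 0 := div_nonpos_of_nonpos_of_nonneg (by linarith) (he j).le
        linarith
      linarith
    set ε : ℝ := min (v i - ∑ j' ∈ Finset.univ.filter (fun j' => (i, j') ∈ E), f i j')
        (e j - F j) with hεdef
    have hεpos : 0 < ε := lt_min (by linarith) (by linarith)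
    set g' : S → A → ℝ := fun i' j' => f i' j' + if (i', j') = (i, j) then ε else 0 with hg'def
    have houtsum : ∀ i', ∑ j' ∈ Finset.univ.filter (fun j' => (i', j') ∈ E), g' i' j'
        = (∑ j' ∈ Finset.univ.filter (fun j' => (i', j') ∈ E), f i' j')
          + (if i' = i then ε else 0) := by
      intro i'
      rw [hg'def]
      rw [Finset.sum_add_distrib]
      congr 1
      by_cases hii : i' = i
      · rw [hii]
        simp only [Prod.mk.injEq, true_and]
        rw [Finset.sum_ite_eq' (Finset.univ.filter (fun j' => (i, j') ∈ E)) j (fun _ => ε)]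
        simp [hij]
      · simp only [Prod.mk.injEq, hii, false_and, if_false, Finset.sum_const_zero]
    have hinsum : ∀ j', ∑ i' ∈ Finset.univ.filter (fun i' => (i', j') ∈ E), g' i' j'
        = (∑ i' ∈ Finset.univ.filter (fun i' => (i', j') ∈ E), f i' j')
          + (if j' = j then ε else 0) := by
      intro j'
      rw [hg'def]
      rw [Finset.sum_add_distrib]
      congr 1
      by_cases hjj : j' = j
      · rw [hjj]
        simp only [Prod.mk.injEq, and_true]
        rw [Finset.sum_ite_eq' (Finset.univ.filter (fun i' => (i', j) ∈ E)) i (fun _ => ε)]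
        simp [hij]
      · simp only [Prod.mk.injEq, hjj, and_false, if_false, Finset.sum_const_zero]
    have hfeas' : Feasible E v e g' := by
      refine ⟨?_, ?_, ?_, ?_⟩
      · intro i' j' h
        rw [hg'def]
        have h0 := hf0 i' j' h
        by_cases hc : (i', j') = (i, j)
        · simp only [hc, if_true]; linarith
        · simp only [hc, if_false]; linarith
      · intro i' j' h
        rw [hg'def]
        have hne' : (i', j') ≠ (i, j) := by
          intro hcc; rw [hcc] at h; exact h hij
        simp [hne', hfE i' j' h]
      · intro i'
        rw [houtsum i']
        by_cases hii : i' = i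
        · rw [hii]
          rw [if_pos rfl]
          have hεle : ε ≤ v i - ∑ j' ∈ Finset.univ.filter (fun j' => (i, j') ∈ E), f i j' :=
            min_le_left _ _
          linarith
        · simp only [hii, if_false, add_zero]
          exact hfv i'
      · intro j'
        rw [hinsum j']
        by_cases hjj : j' = j
        · rw [hjj]
          rw [if_pos rfl]
          have hεle : ε ≤ e j - F j := min_le_right _ _
          simp only [hFdef] at hεle
          linarith
        · simp only [hjj, if_false, add_zero]
          exact hfe j'
    have hval : flowValue E g' = flowValue E f + ε := by
      rw [hg'def]
      simp only [flowValue]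
      rw [Finset.sum_add_distrib]
      congr 1
      simp only [Prod.mk.eta]
      rw [Finset.sum_ite_eq' E (i, j) (fun _ => ε)]
      simp [hij]
    have := hmax g' hfeas'
    rw [hval] at this
    linarith
  -- Per-security inequality.
  have hperi : ∀ i : S, ∑ j : A, r j * g i j ≤ ∑ j : A, r j * f i j := by
    intro i
    by_cases hsatur : (∑ j' ∈ Finset.univ.filter (fun j' => (i, j') ∈ E), f i j') < v i
    · have hz : ∀ j, r j * g i j = 0 ∧ r j * f i j = 0 := by
        intro j
        by_cases hij : (i, j) ∈ E
        · have h0 := hsat i j hij hsatur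
          simp [h0]
        · simp [hfE i j hij, hgE i j hij]
      have e1 : ∑ j : A, r j * g i j = 0 := Finset.sum_eq_zero (fun j _ => (hz j).1)
      have e2 : ∑ j : A, r j * f i j = 0 := Finset.sum_eq_zero (fun j _ => (hz j).2)
      rw [e1, e2]
    · push_neg at hsatur
      have hsum : ∑ j' ∈ Finset.univ.filter (fun j' => (i, j') ∈ E), f i j' = v i :=
        le_antisymm (hfv i) hsatur
      by_cases hex : ∃ j0, (i, j0) ∈ E ∧ 0 < f i j0
      · obtain ⟨j0, hj0E, hj0pos⟩ := hex
        have hle : ∀ l, (i, l) ∈ E → r l ≤ r j0 := fun l hl =>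
          hratio i j0 l hj0E hj0pos hl
        have hfeq : ∀ j, r j * f i j = r j0 * f i j := by
          intro j
          by_cases hij : (i, j) ∈ E
          · rcases lt_or_eq_of_le (hf0 i j hij) with hpos | heq
            · have h1 : r j0 ≤ r j := hratio i j j0 hij hpos hj0E
              have h2 : r j ≤ r j0 := hle j hij
              rw [le_antisymm h2 h1]
            · rw [← heq]; ring
          · rw [hfE i j hij]; ring
        have hfullf : ∑ j : A, f i j
            = ∑ j' ∈ Finset.univ.filter (fun j' => (i, j') ∈ E), f i j' :=
          (Finset.sum_subset (Finset.filter_subset _ _) (fun x _ hx => by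
            have : (i, x) ∉ E := by simpa using hx
            exact hfE i x this)).symm
        have hfullg : ∑ j : A, g i j
            = ∑ j' ∈ Finset.univ.filter (fun j' => (i, j') ∈ E), g i j' :=
          (Finset.sum_subset (Finset.filter_subset _ _) (fun x _ hx => by
            have : (i, x) ∉ E := by simpa using hx
            exact hgE i x this)).symm
        have hfsum : ∑ j : A, r j * f i j = r j0 * v i := by
          rw [Finset.sum_congr rfl (fun j _ => hfeq j), ← Finset.mul_sum, hfullf, hsum]
        have hgsum : ∑ j : A, r j * g i j ≤ r j0 * v i := by
          have step1 : ∑ j : A, r j * g i j ≤ ∑ j : A, r j0 * g i j := by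
            apply Finset.sum_le_sum
            intro j _
            by_cases hij : (i, j) ∈ E
            · exact mul_le_mul_of_nonneg_right (hle j hij) (hg0 i j hij)
            · rw [hgE i j hij]; simp
          have step2 : ∑ j : A, r j0 * g i j = r j0 * ∑ j : A, g i j :=
            (Finset.mul_sum _ _ _).symm
          have step3 : r j0 * ∑ j : A, g i j ≤ r j0 * v i := by
            apply mul_le_mul_of_nonneg_left _ (hrnn j0)
            rw [hfullg]; exact hgv i
          linarith
        rw [hfsum]
        exact hgsum
      · push_neg at hex
        have hf00 : ∀ j, f i j = 0 := by
          intro j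
          by_cases hij : (i, j) ∈ E
          · exact le_antisymm (hex j hij) (hf0 i j hij)
          · exact hfE i j hij
        have hv0 : v i = 0 := by
          rw [← hsum]
          exact Finset.sum_eq_zero (fun j _ => hf00 j)
        have hg00 : ∀ j, g i j = 0 := by
          intro j
          by_cases hij : (i, j) ∈ E
          · have hle0 : ∑ j' ∈ Finset.univ.filter (fun j' => (i, j') ∈ E), g i j' ≤ 0 := by
              rw [← hv0]; exact hgv i
            have := (Finset.sum_eq_zero_iff_of_nonneg
              (fun x hx => hg0 i x (by simpa using hx))).mp
              (le_antisymm hle0 (Finset.sum_nonneg (fun x hx => hg0 i x (by simpa using hx))))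
            exact this j (by simpa using hij)
          · exact hgE i j hij
        have e1 : ∑ j : A, r j * g i j = 0 :=
          Finset.sum_eq_zero (fun j _ => by rw [hg00 j]; ring)
        have e2 : ∑ j : A, r j * f i j = 0 :=
          Finset.sum_eq_zero (fun j _ => by rw [hf00 j]; ring)
        rw [e1, e2]
  -- Convexity pointwise inequality.
  have hkey : ∀ j, 2 * (r j * (F j - G j)) ≤ e j * (s j) ^ 2 - e j * (r j) ^ 2 := by
    intro j
    have hFG : F j - G j = e j * (s j - r j) := by
      have hne : e j ≠ 0 := (he j).ne'
      simp only [hrdef, hsdef, riskRatio, hFdef, hGdef]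
      field_simp
      ring
    rw [hFG]
    nlinarith [sq_nonneg (s j - r j), he j]
  have h1 : 2 * ∑ j : A, r j * (F j - G j) ≤ objective E e g - objective E e f := by
    simp only [objective]
    rw [← hrdef, ← hsdef, Finset.mul_sum, ← Finset.sum_sub_distrib]
    exact Finset.sum_le_sum (fun j _ => hkey j)
  have hswapf : ∑ j : A, r j * F j = ∑ i : S, ∑ j : A, r j * f i j := by
    have step1 : ∀ j : A, r j * F j = ∑ i : S, r j * f i j := by
      intro j
      rw [hFdef]
      simp only
      rw [Finset.mul_sum]
      exact Finset.sum_subset (Finset.filter_subset _ _) (fun x _ hx => by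
        have hxE : (x, j) ∉ E := by simpa using hx
        rw [hfE x j hxE]; ring)
    rw [Finset.sum_congr rfl (fun j _ => step1 j), Finset.sum_comm]
  have hswapg : ∑ j : A, r j * G j = ∑ i : S, ∑ j : A, r j * g i j := by
    have step1 : ∀ j : A, r j * G j = ∑ i : S, r j * g i j := by
      intro j
      rw [hGdef]
      simp only
      rw [Finset.mul_sum]
      exact Finset.sum_subset (Finset.filter_subset _ _) (fun x _ hx => by
        have hxE : (x, j) ∉ E := by simpa using hx
        rw [hgE x j hxE]; ring)
    rw [Finset.sum_congr rfl (fun j _ => step1 j), Finset.sum_comm]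
  have h2 : 0 ≤ ∑ j : A, r j * (F j - G j) := by
    have heq : ∑ j : A, r j * (F j - G j) = (∑ j : A, r j * F j) - ∑ j : A, r j * G j := by
      rw [← Finset.sum_sub_distrib]
      exact Finset.sum_congr rfl (fun j _ => by ring)
    rw [heq, hswapf, hswapg, sub_nonneg]
    exact Finset.sum_le_sum (fun i _ => hperi i)
  linarith
end

section
/- Any two ratio-balanced maximum flows are equivalent: if f and g are both maximum flows satisfying the ratio constraint, then r_j^f = r_j^g for every account j ∈ A. -/
open Finset
open scoped Classical

variable {S A : Type*} [Fintype S] [Fintype A]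

noncomputable def inflow (E : Finset (S × A)) (f : S → A → ℝ) (j : A) : ℝ :=
  ∑ i ∈ Finset.univ.filter (fun i => (i, j) ∈ E), f i j

noncomputable def outflow (E : Finset (S × A)) (f : S → A → ℝ) (i : S) : ℝ :=
  ∑ j ∈ Finset.univ.filter (fun j => (i, j) ∈ E), f i j

lemma saturation (E : Finset (S × A)) (v : S → ℝ) (e : A → ℝ) (f : S → A → ℝ)
    (hmf : IsMaxFlow E v e f)
    (i : S) (l : A) (hil : (i, l) ∈ E)
    (hlt : inflow E f l < e l) : outflow E f i = v i := by
  obtain ⟨⟨hpos, hzero, hout, hin⟩, hmax⟩ := hmf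
  by_contra hne
  have hOut : outflow E f i < v i := lt_of_le_of_ne (hout i) hne
  set ε := min (v i - outflow E f i) (e l - inflow E f l) with hε
  have hεpos : 0 < ε := lt_min (by linarith) (by linarith)
  set g : S → A → ℝ := fun a b => f a b + if a = i ∧ b = l then ε else 0 with hg
  have hgout : ∀ a : S, ∑ j ∈ Finset.univ.filter (fun j => (a, j) ∈ E), g a j
      = outflow E f a + if a = i then ε else 0 := by
    intro a
    simp only [hg]
    rw [Finset.sum_add_distrib]
    by_cases ha : a = i
    · rw [ha]
      simp only [true_and, if_true]
      rw [Finset.sum_ite_eq' _ l (fun _ => ε)]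
      simp [hil, outflow]
    · simp only [ha, false_and, if_false, Finset.sum_const_zero, outflow, add_zero]
  have hgin : ∀ b : A, ∑ a ∈ Finset.univ.filter (fun a => (a, b) ∈ E), g a b
      = inflow E f b + if b = l then ε else 0 := by
    intro b
    simp only [hg]
    rw [Finset.sum_add_distrib]
    by_cases hb : b = l
    · rw [hb]
      simp only [and_true, if_true]
      rw [Finset.sum_ite_eq' _ i (fun _ => ε)]
      simp [hil, inflow]
    · simp only [hb, and_false, if_false, Finset.sum_const_zero, inflow, add_zero]
  have hgfeas : Feasible E v e g := by
    refine ⟨?_, ?_, ?_, ?_⟩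
    · intro a b hab
      have h1 := hpos a b hab
      have h2 : (0:ℝ) ≤ if a = i ∧ b = l then ε else 0 := by positivity
      simp only [hg]; linarith
    · intro a b hab
      have h1 := hzero a b hab
      have h2 : ¬ (a = i ∧ b = l) := by
        rintro ⟨rfl, rfl⟩; exact hab hil
      simp [hg, h1, h2]
    · intro a
      rw [hgout a]
      by_cases ha : a = i
      · rw [ha]; simp only [if_true]
        have h3 : ε ≤ v i - outflow E f i := min_le_left _ _
        linarith
      · simp only [ha, if_false, add_zero]; exact hout a
    · intro b
      rw [hgin b]
      by_cases hb : b = l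
      · rw [hb]; simp only [if_true]
        have h3 : ε ≤ e l - inflow E f l := min_le_right _ _
        linarith
      · simp only [hb, if_false, add_zero]; exact hin b
  have hval : flowValue E g = flowValue E f + ε := by
    simp only [flowValue, hg]
    rw [Finset.sum_add_distrib]
    congr 1
    have h4 : ∀ p : S × A, (if p.1 = i ∧ p.2 = l then ε else 0) = if p = (i, l) then ε else 0 := by
      intro p; congr 1; simp [Prod.ext_iff]
    rw [Finset.sum_congr rfl (fun p _ => h4 p), Finset.sum_ite_eq' E (i, l) (fun _ => ε)]
    simp [hil]
  have := hmax g hgfeas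
  rw [hval] at this
  linarith

lemma riskRatio_nonneg (E : Finset (S × A)) (v : S → ℝ) (e : A → ℝ) (f : S → A → ℝ)
    (hfeas : Feasible E v e f) (he : ∀ j, 0 < e j) (j : A) :
    0 ≤ riskRatio E e f j :=
  div_nonneg (by linarith [hfeas.2.2.2 j]) (he j).le

lemma per_i (E : Finset (S × A)) (v : S → ℝ) (e : A → ℝ) (he : ∀ j, 0 < e j)
    (f g : S → A → ℝ) (hf : RatioBalanced E v e f) (hg : Feasible E v e g) (i : S) :
    ∑ j ∈ Finset.univ.filter (fun j => (i, j) ∈ E), riskRatio E e f j * g i j ≤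
    ∑ j ∈ Finset.univ.filter (fun j => (i, j) ∈ E), riskRatio E e f j * f i j := by
  obtain ⟨hmf, hrc⟩ := hf
  have hffeas := hmf.1
  set N := Finset.univ.filter (fun j => (i, j) ∈ E) with hN
  by_cases hA : ∀ j ∈ N, riskRatio E e f j = 0
  · rw [Finset.sum_eq_zero (fun j hj => by rw [hA j hj, zero_mul]),
      Finset.sum_eq_zero (fun j hj => by rw [hA j hj, zero_mul])]
  · push_neg at hA
    obtain ⟨l, hlN, hl0⟩ := hA
    have hlE : (i, l) ∈ E := (Finset.mem_filter.mp hlN).2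
    have hlpos : 0 < riskRatio E e f l :=
      lt_of_le_of_ne (riskRatio_nonneg E v e f hffeas he l) (Ne.symm hl0)
    have hinlt : inflow E f l < e l := by
      by_contra hcon
      push_neg at hcon
      have : riskRatio E e f l ≤ 0 :=
        div_nonpos_of_nonpos_of_nonneg (by simpa [inflow] using sub_nonpos.mpr hcon) (he l).le
      linarith
    have hsat : outflow E f i = v i := saturation E v e f hmf i l hlE hinlt
    have hNne : N.Nonempty := ⟨l, hlN⟩
    set ρ := N.sup' hNne (riskRatio E e f) with hρ
    have hρpos : 0 < ρ := lt_of_lt_of_le hlpos (Finset.le_sup' _ hlN)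
    have hle : ∀ j ∈ N, riskRatio E e f j ≤ ρ := fun j hj => Finset.le_sup' _ hj
    have hRHS : ∑ j ∈ N, riskRatio E e f j * f i j = ρ * v i := by
      have h5 : ∑ j ∈ N, riskRatio E e f j * f i j = ∑ j ∈ N, ρ * f i j := by
        refine Finset.sum_congr rfl fun j hj => ?_
        have hjE : (i, j) ∈ E := (Finset.mem_filter.mp hj).2
        rcases eq_or_lt_of_le (hffeas.1 i j hjE) with h0 | hpos'
        · rw [← h0, mul_zero, mul_zero]
        · have heq : riskRatio E e f j = ρ := le_antisymm (hle j hj)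
            (Finset.sup'_le hNne _ fun m hm => hrc i j m hjE hpos' (Finset.mem_filter.mp hm).2)
          rw [heq]
      rw [h5, ← Finset.mul_sum]
      have h6 : (∑ j ∈ N, f i j) = outflow E f i := rfl
      rw [h6, hsat]
    rw [hRHS]
    calc ∑ j ∈ N, riskRatio E e f j * g i j
        ≤ ∑ j ∈ N, ρ * g i j := by
          refine Finset.sum_le_sum fun j hj => ?_
          exact mul_le_mul_of_nonneg_right (hle j hj) (hg.1 i j (Finset.mem_filter.mp hj).2)
      _ = ρ * ∑ j ∈ N, g i j := (Finset.mul_sum _ _ _).symm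
      _ ≤ ρ * v i := mul_le_mul_of_nonneg_left (hg.2.2.1 i) hρpos.le

lemma swap_sum (E : Finset (S × A)) (r : A → ℝ) (h : S → A → ℝ) :
    ∑ j : A, r j * inflow E h j
      = ∑ i : S, ∑ j ∈ Finset.univ.filter (fun j => (i, j) ∈ E), r j * h i j := by
  unfold inflow
  simp_rw [Finset.mul_sum, Finset.sum_filter]
  rw [Finset.sum_comm]

lemma key_ineq (E : Finset (S × A)) (v : S → ℝ) (e : A → ℝ) (he : ∀ j, 0 < e j)
    (f g : S → A → ℝ) (hf : RatioBalanced E v e f) (hg : Feasible E v e g) :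
    0 ≤ ∑ j : A, riskRatio E e f j * (inflow E f j - inflow E g j) := by
  have h1 : ∑ j : A, riskRatio E e f j * (inflow E f j - inflow E g j)
      = (∑ j : A, riskRatio E e f j * inflow E f j)
        - ∑ j : A, riskRatio E e f j * inflow E g j := by
    rw [← Finset.sum_sub_distrib]
    exact Finset.sum_congr rfl fun j _ => by ring
  rw [h1, sub_nonneg, swap_sum, swap_sum]
  exact Finset.sum_le_sum fun i _ => per_i E v e he f g hf hg i

lemma obj_identity (E : Finset (S × A)) (e : A → ℝ) (he : ∀ j, 0 < e j)
    (f g : S → A → ℝ) :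
    objective E e g - objective E e f
      = 2 * ∑ j : A, riskRatio E e f j * (inflow E f j - inflow E g j)
        + ∑ j : A, (inflow E f j - inflow E g j) ^ 2 / e j := by
  have h : ∀ j : A, e j * (riskRatio E e g j) ^ 2 - e j * (riskRatio E e f j) ^ 2
      = 2 * (riskRatio E e f j * (inflow E f j - inflow E g j))
        + (inflow E f j - inflow E g j) ^ 2 / e j := by
    intro j
    have hej : e j ≠ 0 := (he j).ne'
    have hrf : riskRatio E e f j = (e j - inflow E f j) / e j := rfl
    have hrg : riskRatio E e g j = (e j - inflow E g j) / e j := rfl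
    rw [hrf, hrg]
    field_simp
    ring
  rw [objective, objective, ← Finset.sum_sub_distrib, Finset.mul_sum,
    ← Finset.sum_add_distrib]
  exact Finset.sum_congr rfl fun j _ => h j

/-- Any two ratio-balanced maximum flows are equivalent. -/
theorem ratioBalanced_equivalent (E : Finset (S × A)) (v : S → ℝ) (e : A → ℝ)
    (hv : ∀ i, 0 ≤ v i) (he : ∀ j, 0 < e j)
    (f g : S → A → ℝ) (hf : RatioBalanced E v e f) (hg : RatioBalanced E v e g) :
    ∀ j : A, riskRatio E e f j = riskRatio E e g j := by
  have Kf := key_ineq E v e he f g hf hg.1.1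
  have Kg := key_ineq E v e he g f hg hf.1.1
  have I1 := obj_identity E e he f g
  have I2 := obj_identity E e he g f
  have hQsymm : ∑ j : A, (inflow E g j - inflow E f j) ^ 2 / e j
      = ∑ j : A, (inflow E f j - inflow E g j) ^ 2 / e j :=
    Finset.sum_congr rfl fun j _ => by ring
  rw [hQsymm] at I2
  have hQnn : ∀ j ∈ (Finset.univ : Finset A),
      0 ≤ (inflow E f j - inflow E g j) ^ 2 / e j :=
    fun j _ => div_nonneg (sq_nonneg _) (he j).le
  have hQ0 : ∑ j : A, (inflow E f j - inflow E g j) ^ 2 / e j = 0 := by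
    have := Finset.sum_nonneg hQnn
    linarith
  have hterm := (Finset.sum_eq_zero_iff_of_nonneg hQnn).mp hQ0
  intro j
  have h1 : (inflow E f j - inflow E g j) ^ 2 / e j = 0 := hterm j (Finset.mem_univ j)
  have h2 : inflow E f j = inflow E g j := by
    have hej : e j ≠ 0 := (he j).ne'
    have := (div_eq_zero_iff.mp h1).resolve_right hej
    have := pow_eq_zero_iff (n := 2) (by norm_num) |>.mp this
    linarith
  have hrf : riskRatio E e f j = (e j - inflow E f j) / e j := rfl
  have hrg : riskRatio E e g j = (e j - inflow E g j) / e j := rfl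
  rw [hrf, hrg, h2]
end

section
/- Any two MWSR flows are equivalent: if f and g are feasible flows each minimizing ∑_{j∈A} e_j (r_j)² among all feasible flows, then r_j^f = r_j^g for every account j ∈ A. -/
open Finset
open scoped Classical

variable {S A : Type*} [Fintype S] [Fintype A]

/-- Any two MWSR flows are equivalent. -/
theorem mwsr_equivalent (E : Finset (S × A)) (v : S → ℝ) (e : A → ℝ)
    (hv : ∀ i, 0 ≤ v i) (he : ∀ j, 0 < e j)
    (f g : S → A → ℝ) (hf : MWSR E v e f) (hg : MWSR E v e g) :
    ∀ j : A, riskRatio E e f j = riskRatio E e g j := by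
  by_contra hcon
  push_neg at hcon
  obtain ⟨j0, hj0⟩ := hcon
  set h : S → A → ℝ := fun i j => (f i j + g i j) / 2 with hhdef
  obtain ⟨f1, f2, f3, f4⟩ := hf.1
  obtain ⟨g1, g2, g3, g4⟩ := hg.1
  have hfeas : Feasible E v e h := by
    refine ⟨fun i j hij => by have := f1 i j hij; have := g1 i j hij; simp [hhdef]; linarith,
      fun i j hij => by simp [hhdef, f2 i j hij, g2 i j hij],
      fun i => ?_, fun j => ?_⟩
    · have hsum : ∑ j ∈ Finset.univ.filter (fun j => (i, j) ∈ E), h i j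
        = ((∑ j ∈ Finset.univ.filter (fun j => (i, j) ∈ E), f i j)
          + ∑ j ∈ Finset.univ.filter (fun j => (i, j) ∈ E), g i j) / 2 := by
        rw [← Finset.sum_add_distrib, ← Finset.sum_div]
      have := f3 i; have := g3 i
      rw [hsum]; linarith
    · have hsum : ∑ i ∈ Finset.univ.filter (fun i => (i, j) ∈ E), h i j
        = ((∑ i ∈ Finset.univ.filter (fun i => (i, j) ∈ E), f i j)
          + ∑ i ∈ Finset.univ.filter (fun i => (i, j) ∈ E), g i j) / 2 := by
        rw [← Finset.sum_add_distrib, ← Finset.sum_div]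
      have := f4 j; have := g4 j
      rw [hsum]; linarith
  have hr : ∀ j : A, riskRatio E e h j = (riskRatio E e f j + riskRatio E e g j) / 2 := by
    intro j
    have hsum : ∑ i ∈ Finset.univ.filter (fun i => (i, j) ∈ E), h i j
        = ((∑ i ∈ Finset.univ.filter (fun i => (i, j) ∈ E), f i j)
          + ∑ i ∈ Finset.univ.filter (fun i => (i, j) ∈ E), g i j) / 2 := by
      rw [← Finset.sum_add_distrib, ← Finset.sum_div]
    have hej : (e j) ≠ 0 := (he j).ne'
    unfold riskRatio
    rw [hsum]
    field_simp
    ring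
  have hobj : objective E e h < objective E e f := by
    have heq : objective E e f = objective E e g :=
      le_antisymm (hf.2 g hg.1) (hg.2 f hf.1)
    have hlt : objective E e h < (objective E e f + objective E e g) / 2 := by
      unfold objective
      rw [← Finset.sum_add_distrib, Finset.sum_div]
      apply Finset.sum_lt_sum
      · intro j _
        rw [hr j]
        have := (he j).le
        nlinarith [sq_nonneg (riskRatio E e f j - riskRatio E e g j)]
      · refine ⟨j0, Finset.mem_univ _, ?_⟩
        rw [hr j0]
        have hne : riskRatio E e f j0 - riskRatio E e g j0 ≠ 0 := sub_ne_zero.mpr hj0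
        have hpos : 0 < (riskRatio E e f j0 - riskRatio E e g j0) ^ 2 := by positivity
        nlinarith [he j0, hpos]
    linarith
  exact absurd (hf.2 h hfeas) (not_le.mpr hobj)
end

section
/- A ratio-balanced maximum flow always exists: there is a feasible flow f that is a maximum flow and satisfies the ratio constraint. -/
open Finset
open scoped Classical

variable {S A : Type*} [Fintype S] [Fintype A]

section RBAux

variable {S A : Type*} [Fintype S] [Fintype A]

private lemma rb_cont_inflow (E : Finset (S × A)) (j : A) :
    Continuous fun f : S → A → ℝ =>
      ∑ i ∈ Finset.univ.filter (fun i => (i, j) ∈ E), f i j :=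
  continuous_finset_sum _ fun i _ => (continuous_apply j).comp (continuous_apply i)

private lemma rb_cont_flowValue (E : Finset (S × A)) :
    Continuous fun f : S → A → ℝ => flowValue E f := by
  unfold flowValue
  exact continuous_finset_sum _ fun p _ => (continuous_apply p.2).comp (continuous_apply p.1)

private lemma rb_cont_objective (E : Finset (S × A)) (e : A → ℝ) :
    Continuous fun f : S → A → ℝ => objective E e f := by
  unfold objective riskRatio
  exact continuous_finset_sum _ fun j _ => continuous_const.mul
    (((continuous_const.sub (rb_cont_inflow E j)).div_const _).pow 2)

private lemma rb_isCompact (E : Finset (S × A)) (v : S → ℝ) (e : A → ℝ) (he : ∀ j, 0 ≤ e j) :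
    IsCompact {f : S → A → ℝ | Feasible E v e f} := by
  have hbox : IsCompact (Set.univ.pi fun _ : S => Set.univ.pi fun b : A => Set.Icc (0:ℝ) (e b)) :=
    isCompact_univ_pi fun _ => isCompact_univ_pi fun b => isCompact_Icc
  refine IsCompact.of_isClosed_subset hbox ?_ ?_
  · -- closedness
    have h1 : IsClosed {f : S → A → ℝ | ∀ i j, (i, j) ∈ E → 0 ≤ f i j} := by
      have : {f : S → A → ℝ | ∀ i j, (i, j) ∈ E → 0 ≤ f i j}
          = ⋂ i, ⋂ j, {f : S → A → ℝ | (i, j) ∈ E → 0 ≤ f i j} := by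
        ext f; simp
      rw [this]
      refine isClosed_iInter fun i => isClosed_iInter fun j => ?_
      by_cases h : (i, j) ∈ E
      · simp only [h, true_implies]
        exact isClosed_le continuous_const ((continuous_apply j).comp (continuous_apply i))
      · simp [h]
    have h2 : IsClosed {f : S → A → ℝ | ∀ i j, (i, j) ∉ E → f i j = 0} := by
      have : {f : S → A → ℝ | ∀ i j, (i, j) ∉ E → f i j = 0}
          = ⋂ i, ⋂ j, {f : S → A → ℝ | (i, j) ∉ E → f i j = 0} := by
        ext f; simp
      rw [this]
      refine isClosed_iInter fun i => isClosed_iInter fun j => ?_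
      by_cases h : (i, j) ∈ E
      · simp [h]
      · simp only [h, not_false_iff, true_implies]
        exact isClosed_eq ((continuous_apply j).comp (continuous_apply i)) continuous_const
    have h3 : IsClosed {f : S → A → ℝ |
        ∀ i : S, ∑ j ∈ Finset.univ.filter (fun j => (i, j) ∈ E), f i j ≤ v i} := by
      have : {f : S → A → ℝ | ∀ i : S, ∑ j ∈ Finset.univ.filter (fun j => (i, j) ∈ E), f i j ≤ v i}
          = ⋂ i, {f : S → A → ℝ | ∑ j ∈ Finset.univ.filter (fun j => (i, j) ∈ E), f i j ≤ v i} := by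
        ext f; simp
      rw [this]
      refine isClosed_iInter fun i => isClosed_le ?_ continuous_const
      exact continuous_finset_sum _ fun j _ => (continuous_apply j).comp (continuous_apply i)
    have h4 : IsClosed {f : S → A → ℝ |
        ∀ j : A, ∑ i ∈ Finset.univ.filter (fun i => (i, j) ∈ E), f i j ≤ e j} := by
      have : {f : S → A → ℝ | ∀ j : A, ∑ i ∈ Finset.univ.filter (fun i => (i, j) ∈ E), f i j ≤ e j}
          = ⋂ j, {f : S → A → ℝ | ∑ i ∈ Finset.univ.filter (fun i => (i, j) ∈ E), f i j ≤ e j} := by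
        ext f; simp
      rw [this]
      exact isClosed_iInter fun j => isClosed_le (rb_cont_inflow E j) continuous_const
    have : {f : S → A → ℝ | Feasible E v e f}
        = {f | ∀ i j, (i, j) ∈ E → 0 ≤ f i j} ∩ ({f | ∀ i j, (i, j) ∉ E → f i j = 0}
          ∩ ({f | ∀ i : S, ∑ j ∈ Finset.univ.filter (fun j => (i, j) ∈ E), f i j ≤ v i}
          ∩ {f | ∀ j : A, ∑ i ∈ Finset.univ.filter (fun i => (i, j) ∈ E), f i j ≤ e j})) := by
      ext f; rfl
    rw [this]
    exact h1.inter (h2.inter (h3.inter h4))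
  · -- subset of box
    rintro f ⟨hf1, hf2, _hf3, hf4⟩ 
    intro a _
    intro b _
    constructor
    · by_cases h : (a, b) ∈ E
      · exact hf1 a b h
      · rw [hf2 a b h]
    · by_cases h : (a, b) ∈ E
      · refine le_trans (Finset.single_le_sum (f := fun i => f i b)
          (fun i hi => hf1 i b (Finset.mem_filter.mp hi).2)
          (Finset.mem_filter.mpr ⟨Finset.mem_univ a, h⟩)) (hf4 b)
      · rw [hf2 a b h]; exact he b

end RBAux


section RBPerturb

variable {S A : Type*} [Fintype S] [Fintype A]

/-- Moving `ε` of flow from edge `(i,j)` to edge `(i,l)` preserves feasibility and value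
and changes the objective in an explicit way. -/
private lemma rb_perturb (E : Finset (S × A)) (v : S → ℝ) (e : A → ℝ) (he : ∀ j, 0 < e j)
    (f : S → A → ℝ) (hf : Feasible E v e f) (i : S) (j l : A)
    (hij : (i, j) ∈ E) (hil : (i, l) ∈ E) (hjl : j ≠ l) (ε : ℝ) (hε : 0 < ε)
    (hεf : ε ≤ f i j)
    (hεl : ε ≤ e l - ∑ a ∈ Finset.univ.filter (fun a => (a, l) ∈ E), f a l) :
    ∃ g : S → A → ℝ, Feasible E v e g ∧ flowValue E g = flowValue E f ∧
      objective E e g = objective E e f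
        + (ε ^ 2 / e j + ε ^ 2 / e l + 2 * ε * (riskRatio E e f j - riskRatio E e f l)) := by
  classical
  obtain ⟨hf1, hf2, hf3, hf4⟩ := hf
  set g : S → A → ℝ := fun a b =>
    f a b + (if (a, b) = (i, l) then ε else 0) - (if (a, b) = (i, j) then ε else 0) with hg
  have hgdef : ∀ a b, g a b =
      f a b + (if (a, b) = (i, l) then ε else 0) - (if (a, b) = (i, j) then ε else 0) :=
    fun a b => rfl
  -- inflow of each account under g
  have hin : ∀ b : A, ∑ a ∈ Finset.univ.filter (fun a => (a, b) ∈ E), g a b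
      = (∑ a ∈ Finset.univ.filter (fun a => (a, b) ∈ E), f a b)
        + (if b = l then ε else 0) - (if b = j then ε else 0) := by
    intro b
    simp only [hgdef]
    rw [Finset.sum_sub_distrib, Finset.sum_add_distrib]
    congr 2
    · by_cases hb : b = l
      · subst hb
        rw [if_pos rfl, Finset.sum_eq_single i]
        · simp
        · intro a _ hne; simp [Prod.ext_iff, hne]
        · intro h; exact absurd (Finset.mem_filter.mpr ⟨Finset.mem_univ i, hil⟩) h
      · rw [if_neg hb, Finset.sum_eq_zero]
        intro a _; simp [Prod.ext_iff, hb]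
    · by_cases hb : b = j
      · subst hb
        rw [if_pos rfl, Finset.sum_eq_single i]
        · simp
        · intro a _ hne; simp [Prod.ext_iff, hne]
        · intro h; exact absurd (Finset.mem_filter.mpr ⟨Finset.mem_univ i, hij⟩) h
      · rw [if_neg hb, Finset.sum_eq_zero]
        intro a _; simp [Prod.ext_iff, hb]
  -- outflow of each security under g
  have hout : ∀ a : S, ∑ b ∈ Finset.univ.filter (fun b => (a, b) ∈ E), g a b
      = ∑ b ∈ Finset.univ.filter (fun b => (a, b) ∈ E), f a b := by
    intro a
    have gen : ∀ (c : A), (i, c) ∈ E →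
        ∑ b ∈ Finset.univ.filter (fun b => (a, b) ∈ E), (if (a, b) = (i, c) then ε else 0)
          = if a = i then ε else 0 := by
      intro c hc
      by_cases ha : a = i
      · rw [if_pos ha, Finset.sum_eq_single c]
        · simp [ha]
        · intro b _ hne; simp [Prod.ext_iff, hne]
        · intro h
          exact absurd (Finset.mem_filter.mpr ⟨Finset.mem_univ c, ha ▸ hc⟩) h
      · rw [if_neg ha]
        exact Finset.sum_eq_zero fun b _ => by simp [Prod.ext_iff, ha]
    simp only [hgdef]
    rw [Finset.sum_sub_distrib, Finset.sum_add_distrib, gen l hil, gen j hij]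
    ring
  refine ⟨g, ⟨?_, ?_, ?_, ?_⟩, ?_, ?_⟩
  · -- nonneg on edges
    intro a b hab
    rw [hgdef]
    rcases eq_or_ne (a, b) (i, l) with h1 | h1
    · have hne : (a, b) ≠ (i, j) := by
        rw [h1]; exact fun h => hjl ((Prod.mk.inj h).2.symm)
      rw [if_pos h1, if_neg hne]
      have := hf1 a b hab
      linarith
    · rcases eq_or_ne (a, b) (i, j) with h2 | h2
      · rw [if_neg h1, if_pos h2]
        have ha : a = i := (Prod.mk.inj h2).1
        have hb : b = j := (Prod.mk.inj h2).2
        rw [ha, hb]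
        linarith
      · rw [if_neg h1, if_neg h2]
        have := hf1 a b hab
        linarith
  · -- zero off edges
    intro a b hab
    rw [hgdef]
    have h1 : (a, b) ≠ (i, l) := fun h => hab (by rw [h]; exact hil)
    have h2 : (a, b) ≠ (i, j) := fun h => hab (by rw [h]; exact hij)
    rw [if_neg h1, if_neg h2, hf2 a b hab]; ring
  · -- outflow bound
    intro a; rw [hout a]; exact hf3 a
  · -- inflow bound
    intro b; rw [hin b]
    by_cases hb1 : b = l
    · subst hb1
      rw [if_pos rfl, if_neg (Ne.symm hjl)]
      linarith
    · rw [if_neg hb1]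
      by_cases hb2 : b = j
      · subst hb2
        rw [if_pos rfl]
        have := hf4 b
        linarith
      · rw [if_neg hb2]
        have := hf4 b
        linarith
  · -- value preserved
    unfold flowValue
    have key : ∀ p : S × A, g p.1 p.2
        = f p.1 p.2 + (if p = (i, l) then ε else 0) - (if p = (i, j) then ε else 0) := by
      intro p; rw [hgdef]
    simp only [key]
    rw [Finset.sum_sub_distrib, Finset.sum_add_distrib]
    have e1 : ∑ p ∈ E, (if p = (i, l) then ε else 0) = ε := by
      rw [Finset.sum_eq_single (i, l)]
      · simp
      · intro p _ hne; simp [hne]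
      · intro h; exact absurd hil h
    have e2 : ∑ p ∈ E, (if p = (i, j) then ε else 0) = ε := by
      rw [Finset.sum_eq_single (i, j)]
      · simp
      · intro p _ hne; simp [hne]
      · intro h; exact absurd hij h
    rw [e1, e2]; ring
  · -- objective change
    have hrr : ∀ b : A, riskRatio E e g b = riskRatio E e f b
        - (if b = l then ε else 0) / e b + (if b = j then ε else 0) / e b := by
      intro b
      have hb := (he b).ne'
      unfold riskRatio
      rw [hin b]
      field_simp
      ring
    have hsplit : objective E e g - objective E e f
        = ∑ b ∈ ({j, l} : Finset A),
            (e b * riskRatio E e g b ^ 2 - e b * riskRatio E e f b ^ 2) := by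
      unfold objective
      rw [← Finset.sum_sub_distrib]
      refine (Finset.sum_subset (Finset.subset_univ _) fun b _ hb => ?_).symm
      have hbj : b ≠ j := by intro h; exact hb (by simp [h])
      have hbl : b ≠ l := by intro h; exact hb (by simp [h])
      rw [hrr b, if_neg hbj, if_neg hbl]
      ring
    rw [Finset.sum_pair hjl] at hsplit
    have hrj : riskRatio E e g j = riskRatio E e f j + ε / e j := by
      rw [hrr j, if_neg hjl, if_pos rfl]; ring
    have hrl : riskRatio E e g l = riskRatio E e f l - ε / e l := by
      rw [hrr l, if_pos rfl, if_neg (Ne.symm hjl)]; ring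
    rw [hrj, hrl] at hsplit
    have hej := (he j).ne'
    have hel := (he l).ne'
    have expand : e j * (riskRatio E e f j + ε / e j) ^ 2 - e j * riskRatio E e f j ^ 2
        + (e l * (riskRatio E e f l - ε / e l) ^ 2 - e l * riskRatio E e f l ^ 2)
        = ε ^ 2 / e j + ε ^ 2 / e l + 2 * ε * (riskRatio E e f j - riskRatio E e f l) := by
      field_simp
      ring
    rw [expand] at hsplit
    linarith

end RBPerturb

/-- A ratio-balanced maximum flow always exists. -/
theorem ratioBalanced_exists (E : Finset (S × A)) (v : S → ℝ) (e : A → ℝ)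
    (hv : ∀ i, 0 ≤ v i) (he : ∀ j, 0 < e j) :
    ∃ f : S → A → ℝ, RatioBalanced E v e f := by
  classical
  have hK0 : Feasible E v e (0 : S → A → ℝ) := by
    refine ⟨fun _ _ _ => le_refl 0, fun _ _ _ => rfl, fun i => ?_, fun j => ?_⟩
    · simpa using hv i
    · simpa using (he j).le
  have hKc : IsCompact {f : S → A → ℝ | Feasible E v e f} :=
    rb_isCompact E v e fun j => (he j).le
  obtain ⟨f0, hf0, hmax⟩ := hKc.exists_isMaxOn ⟨0, hK0⟩ (rb_cont_flowValue E).continuousOn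
  have hK2c : IsCompact ({f : S → A → ℝ | Feasible E v e f}
      ∩ {f | flowValue E f = flowValue E f0}) :=
    hKc.inter_right (isClosed_eq (rb_cont_flowValue E) continuous_const)
  obtain ⟨f, hfK2, hmin⟩ :=
    hK2c.exists_isMinOn ⟨f0, hf0, rfl⟩ (rb_cont_objective E e).continuousOn
  obtain ⟨hfK, hfval⟩ := hfK2
  rw [Set.mem_setOf_eq] at hfK hfval
  refine ⟨f, ⟨hfK, fun g hg => ?_⟩, ?_⟩
  · exact (isMaxOn_iff.mp hmax g hg).trans_eq hfval.symm
  · intro i j l hij hpos hil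
    by_contra hcon
    push_neg at hcon
    have hjl : j ≠ l := fun h => by rw [h] at hcon; exact lt_irrefl _ hcon
    have hrj0 : 0 ≤ riskRatio E e f j := by
      unfold riskRatio
      apply div_nonneg _ (he j).le
      have := hfK.2.2.2 j
      linarith
    have hrl_pos : 0 < riskRatio E e f l := lt_of_le_of_lt hrj0 hcon
    have hc0 : 0 < (riskRatio E e f l - riskRatio E e f j) * (e j * e l) / (e j + e l) :=
      div_pos (mul_pos (sub_pos.mpr hcon) (mul_pos (he j) (he l))) (add_pos (he j) (he l))
    set ε := min (f i j) (min (e l * riskRatio E e f l)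
      ((riskRatio E e f l - riskRatio E e f j) * (e j * e l) / (e j + e l))) with hεdef
    have hε : 0 < ε := lt_min hpos (lt_min (mul_pos (he l) hrl_pos) hc0)
    have hεf : ε ≤ f i j := min_le_left _ _
    have hinl : e l * riskRatio E e f l
        = e l - ∑ a ∈ Finset.univ.filter (fun a => (a, l) ∈ E), f a l := by
      unfold riskRatio
      rw [mul_comm, div_mul_cancel₀ _ (he l).ne']
    have hεl : ε ≤ e l - ∑ a ∈ Finset.univ.filter (fun a => (a, l) ∈ E), f a l := by
      rw [← hinl]; exact le_trans (min_le_right _ _) (min_le_left _ _)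
    obtain ⟨g, hgF, hgval, hgobj⟩ := rb_perturb E v e he f hfK i j l hij hil hjl ε hε hεf hεl
    have hg2 : g ∈ {f : S → A → ℝ | Feasible E v e f}
        ∩ {f | flowValue E f = flowValue E f0} := ⟨hgF, by
      rw [Set.mem_setOf_eq, hgval]; exact hfval⟩
    have hle : objective E e f ≤ objective E e g := isMinOn_iff.mp hmin g hg2
    rw [hgobj] at hle
    have key : ε * (e j + e l) ≤ (riskRatio E e f l - riskRatio E e f j) * (e j * e l) := by
      have hεc : ε ≤ (riskRatio E e f l - riskRatio E e f j) * (e j * e l) / (e j + e l) :=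
        le_trans (min_le_right _ _) (min_le_right _ _)
      exact (le_div_iff₀ (add_pos (he j) (he l))).mp hεc
    have huw : ε / e j + ε / e l ≤ riskRatio E e f l - riskRatio E e f j := by
      rw [div_add_div _ _ (he j).ne' (he l).ne', div_le_iff₀ (mul_pos (he j) (he l))]
      nlinarith [key]
    have hX : ε ^ 2 / e j + ε ^ 2 / e l
        + 2 * ε * (riskRatio E e f j - riskRatio E e f l) < 0 := by
      have e1 : ε ^ 2 / e j = ε * (ε / e j) := by ring
      have e2 : ε ^ 2 / e l = ε * (ε / e l) := by ring
      rw [e1, e2]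
      nlinarith [mul_le_mul_of_nonneg_left huw hε.le, mul_pos hε (sub_pos.mpr hcon)]
    linarith
end

section
/- Let f be a ratio-balanced maximum flow, assume A is nonempty, let R = max_{j∈A} r_j^f and assume R > 0. Let A' = {j ∈ A : r_j^f = R} and S' = {i ∈ S : f_{ij} > 0 for some j ∈ A'}. Then every security i ∈ S with v_i > 0 that has an edge (i,j) ∈ E to some account j ∈ A' belongs to S'; in particular, no security outside S' with positive value has an edge into A'. -/
open Finset
open scoped Classical

variable {S A : Type*} [Fintype S] [Fintype A]

/-- every security with positive value having an edge into the set
`A'` of least-secured accounts sends positive flow to some account of `A'`. -/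
theorem edge_into_Aprime_mem_Sprime [Nonempty A] (E : Finset (S × A)) (v : S → ℝ) (e : A → ℝ)
    (hv : ∀ i, 0 ≤ v i) (he : ∀ j, 0 < e j)
    (f : S → A → ℝ) (hf : RatioBalanced E v e f)
    (R : ℝ) (hRdef : R = Finset.univ.sup' Finset.univ_nonempty (riskRatio E e f))
    (hRpos : 0 < R) :
    ∀ i : S, 0 < v i → (∃ j : A, (i, j) ∈ E ∧ riskRatio E e f j = R) →
      ∃ j : A, (i, j) ∈ E ∧ riskRatio E e f j = R ∧ 0 < f i j := by
  intro i hvi ⟨j, hij, hrj⟩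
  obtain ⟨⟨⟨hnn, hoff, hout, hin⟩, hmax⟩, hrc⟩ := hf
  have hle : ∀ l : A, riskRatio E e f l ≤ R := by
    intro l; rw [hRdef]; exact Finset.le_sup' _ (Finset.mem_univ l)
  by_cases hpos : ∃ l : A, (i, l) ∈ E ∧ 0 < f i l
  · obtain ⟨l, hil, hfl⟩ := hpos
    refine ⟨l, hil, ?_, hfl⟩
    have h1 := hrc i l j hil hfl hij
    have h2 := hle l
    rw [hrj] at h1
    linarith
  · exfalso
    push_neg at hpos
    have hzero : ∀ l : A, f i l = 0 := by
      intro l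
      by_cases hl : (i, l) ∈ E
      · exact le_antisymm (hpos l hl) (hnn i l hl)
      · exact hoff i l hl
    set s := ∑ i' ∈ Finset.univ.filter (fun i' => (i', j) ∈ E), f i' j with hs
    have hrj' : (e j - s) / e j = R := by
      rw [hs]; simp only [riskRatio] at hrj; exact hrj
    have hslt : s < e j := by
      have h0 : 0 < (e j - s) / e j := by rw [hrj']; exact hRpos
      rcases div_pos_iff.mp h0 with ⟨h1, _⟩ | ⟨_, h2⟩
      · linarith
      · linarith [he j]
    set ε := min (v i) (e j - s) with hε
    have hεpos : 0 < ε := lt_min hvi (by linarith)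
    set g : S → A → ℝ := fun a b => f a b + if (a, b) = (i, j) then ε else 0 with hg
    have hfeas : Feasible E v e g := by
      refine ⟨?_, ?_, ?_, ?_⟩
      · intro a b hab
        have := hnn a b hab
        simp only [hg]
        split <;> linarith
      · intro a b hab
        have hne : (a, b) ≠ (i, j) := by intro h; rw [h] at hab; exact hab hij
        simp only [hg]
        rw [if_neg hne, hoff a b hab, add_zero]
      · intro a
        by_cases ha : a = i
        · subst ha
          have heq : ∑ b ∈ Finset.univ.filter (fun b => (a, b) ∈ E), g a b
              = ∑ b ∈ Finset.univ.filter (fun b => (a, b) ∈ E), (if b = j then ε else 0) := by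
            apply Finset.sum_congr rfl
            intro b _
            simp [hg, hzero b, Prod.ext_iff]
          rw [heq, Finset.sum_ite_eq' _ j (fun _ => ε)]
          simp only [Finset.mem_filter, Finset.mem_univ, true_and, hij, if_true]
          exact le_trans (min_le_left _ _) (le_refl _)
        · have heq : ∑ b ∈ Finset.univ.filter (fun b => (a, b) ∈ E), g a b
              = ∑ b ∈ Finset.univ.filter (fun b => (a, b) ∈ E), f a b := by
            apply Finset.sum_congr rfl
            intro b _
            have hne : (a, b) ≠ (i, j) := by simp [Prod.ext_iff, ha]
            simp only [hg]
            rw [if_neg hne, add_zero]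
          rw [heq]; exact hout a
      · intro b
        by_cases hb : b = j
        · subst hb
          have heq : ∑ a ∈ Finset.univ.filter (fun a => (a, b) ∈ E), g a b
              = ∑ a ∈ Finset.univ.filter (fun a => (a, b) ∈ E),
                  (f a b + if a = i then ε else 0) := by
            apply Finset.sum_congr rfl
            intro a _
            simp [hg, Prod.ext_iff]
          rw [heq, Finset.sum_add_distrib, Finset.sum_ite_eq' _ i (fun _ => ε)]
          simp only [Finset.mem_filter, Finset.mem_univ, true_and, hij, if_true]
          have hmin : ε ≤ e b - s := min_le_right _ _
          rw [← hs]
          linarith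
        · have heq : ∑ a ∈ Finset.univ.filter (fun a => (a, b) ∈ E), g a b
              = ∑ a ∈ Finset.univ.filter (fun a => (a, b) ∈ E), f a b := by
            apply Finset.sum_congr rfl
            intro a _
            have hne : (a, b) ≠ (i, j) := by simp [Prod.ext_iff, hb]
            simp only [hg]
            rw [if_neg hne, add_zero]
          rw [heq]; exact hin b
    have hval : flowValue E g = flowValue E f + ε := by
      unfold flowValue
      have hcong : ∀ p ∈ E, g p.1 p.2 = f p.1 p.2 + (if p = (i, j) then ε else 0) := by
        intro p _; simp only [hg]
      rw [Finset.sum_congr rfl hcong, Finset.sum_add_distrib,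
        Finset.sum_ite_eq' E (i, j) (fun _ => ε)]
      rw [if_pos hij]
    have := hmax g hfeas
    rw [hval] at this
    linarith
end

section
/- Let f be a ratio-balanced maximum flow, assume A is nonempty, let R = max_{j∈A} r_j^f and assume R > 0. Let A' = {j ∈ A : r_j^f = R} and S' = {i ∈ S : f_{ij} > 0 for some j ∈ A'}. Then securities in S' send flow only to A': for every i ∈ S' and every edge (i,j) ∈ E with j ∉ A', f_{ij} = 0. -/
open Finset
open scoped Classical

variable {S A : Type*} [Fintype S] [Fintype A]

/-- securities of `S'` (those sending positive flow to a
least-secured account) send flow only into `A'` (the least-secured accounts). -/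
theorem Sprime_flow_only_into_Aprime [Nonempty A] (E : Finset (S × A)) (v : S → ℝ) (e : A → ℝ)
    (hv : ∀ i, 0 ≤ v i) (he : ∀ j, 0 < e j)
    (f : S → A → ℝ) (hf : RatioBalanced E v e f)
    (R : ℝ) (hRdef : R = Finset.univ.sup' Finset.univ_nonempty (riskRatio E e f))
    (hRpos : 0 < R) :
    ∀ i : S, (∃ j' : A, riskRatio E e f j' = R ∧ 0 < f i j') →
      ∀ j : A, (i, j) ∈ E → riskRatio E e f j ≠ R → f i j = 0 := by
  rintro i ⟨j', hj', hpos⟩ j hjE hne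
  obtain ⟨⟨⟨hnn, hzero, _, _⟩, _⟩, hrc⟩ := hf
  by_contra h
  have hposj : 0 < f i j := lt_of_le_of_ne (hnn i j hjE) (Ne.symm h)
  have hj'E : (i, j') ∈ E := by
    by_contra hE
    exact absurd (hzero i j' hE) (ne_of_gt hpos)
  have h1 : R ≤ riskRatio E e f j := hj' ▸ hrc i j j' hjE hposj hj'E
  have h2 : riskRatio E e f j ≤ R := by
    rw [hRdef]; exact Finset.le_sup' _ (Finset.mem_univ j)
  exact hne (le_antisymm h2 h1)
end

section
/- Let f be a ratio-balanced maximum flow, assume A is nonempty, let R = max_{j∈A} r_j^f and assume R > 0. Let A' = {j ∈ A : r_j^f = R} and S' = {i ∈ S : f_{ij} > 0 for some j ∈ A'}. Then every security i ∈ S' is saturated: ∑_{j : (i,j)∈E} f_{ij} = v_i. -/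
open Finset
open scoped Classical

variable {S A : Type*} [Fintype S] [Fintype A]

/-- every security in `S'` (sending positive flow to a
least-secured account) is saturated. -/
theorem Sprime_saturated [Nonempty A] (E : Finset (S × A)) (v : S → ℝ) (e : A → ℝ)
    (hv : ∀ i, 0 ≤ v i) (he : ∀ j, 0 < e j)
    (f : S → A → ℝ) (hf : RatioBalanced E v e f)
    (R : ℝ) (hRdef : R = Finset.univ.sup' Finset.univ_nonempty (riskRatio E e f))
    (hRpos : 0 < R) :
    ∀ i : S, (∃ j : A, riskRatio E e f j = R ∧ 0 < f i j) →
      ∑ j ∈ Finset.univ.filter (fun j => (i, j) ∈ E), f i j = v i := by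
  rintro i ⟨j, hjR, hij⟩
  obtain ⟨⟨⟨h0, hoff, hvle, hele⟩, hmax⟩, _hrc⟩ := hf
  -- (i, j) ∈ E since f i j > 0
  have hE : (i, j) ∈ E := by
    by_contra h
    have := hoff i j h
    linarith
  -- account j has slack: inflow < e j
  have hslack : ∑ a ∈ Finset.univ.filter (fun a => (a, j) ∈ E), f a j < e j := by
    have : riskRatio E e f j > 0 := hjR ▸ hRpos
    have hej := he j
    rw [gt_iff_lt, riskRatio, div_pos_iff] at this
    rcases this with ⟨h1, _⟩ | ⟨_, h2⟩ <;> linarith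
  -- suppose not saturated
  by_contra hns
  have hlt : ∑ b ∈ Finset.univ.filter (fun b => (i, b) ∈ E), f i b < v i :=
    lt_of_le_of_ne (hvle i) hns
  set ε : ℝ := min (v i - ∑ b ∈ Finset.univ.filter (fun b => (i, b) ∈ E), f i b)
      (e j - ∑ a ∈ Finset.univ.filter (fun a => (a, j) ∈ E), f a j) with hε
  have hεpos : 0 < ε := lt_min (by linarith) (by linarith)
  set g : S → A → ℝ := fun a b => f a b + if a = i ∧ b = j then ε else 0 with hg
  have hfeas : Feasible E v e g := by
    refine ⟨?_, ?_, ?_, ?_⟩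
    · intro a b hab
      have := h0 a b hab
      have : (0:ℝ) ≤ if a = i ∧ b = j then ε else 0 := by positivity
      simp only [hg]
      have := h0 a b hab
      linarith
    · intro a b hab
      have hz := hoff a b hab
      simp only [hg, hz]
      rw [if_neg, add_zero]
      rintro ⟨rfl, rfl⟩
      exact hab hE
    · intro a
      by_cases ha : a = i
      · subst ha
        have hsum : ∑ b ∈ Finset.univ.filter (fun b => (a, b) ∈ E), g a b
            = (∑ b ∈ Finset.univ.filter (fun b => (a, b) ∈ E), f a b) + ε := by
          simp only [hg]
          rw [Finset.sum_add_distrib]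
          congr 1
          simp [Finset.sum_ite_eq', Finset.mem_filter, hE]
        rw [hsum]
        have : ε ≤ v a - ∑ b ∈ Finset.univ.filter (fun b => (a, b) ∈ E), f a b :=
          min_le_left _ _
        linarith
      · have hsum : ∑ b ∈ Finset.univ.filter (fun b => (a, b) ∈ E), g a b
            = ∑ b ∈ Finset.univ.filter (fun b => (a, b) ∈ E), f a b := by
          apply Finset.sum_congr rfl
          intro b _
          simp [hg, ha]
        rw [hsum]; exact hvle a
    · intro b
      by_cases hb : b = j
      · subst hb
        have hsum : ∑ a ∈ Finset.univ.filter (fun a => (a, b) ∈ E), g a b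
            = (∑ a ∈ Finset.univ.filter (fun a => (a, b) ∈ E), f a b) + ε := by
          simp only [hg]
          rw [Finset.sum_add_distrib]
          congr 1
          simp [Finset.sum_ite_eq', Finset.mem_filter, hE]
        rw [hsum]
        have : ε ≤ e b - ∑ a ∈ Finset.univ.filter (fun a => (a, b) ∈ E), f a b :=
          min_le_right _ _
        linarith
      · have hsum : ∑ a ∈ Finset.univ.filter (fun a => (a, b) ∈ E), g a b
            = ∑ a ∈ Finset.univ.filter (fun a => (a, b) ∈ E), f a b := by
          apply Finset.sum_congr rfl
          intro a _
          simp [hg, hb]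
        rw [hsum]; exact hele b
  have hval : flowValue E g = flowValue E f + ε := by
    simp only [flowValue, hg]
    rw [Finset.sum_add_distrib]
    congr 1
    rw [show (fun p : S × A => if p.1 = i ∧ p.2 = j then ε else 0)
        = fun p : S × A => if p = (i, j) then ε else 0 from by
      funext p; simp [Prod.ext_iff]]
    simp [Finset.sum_ite_eq', hE]
  have := hmax g hfeas
  rw [hval] at this
  linarith
end

section
/- Let f be a ratio-balanced maximum flow, assume A is nonempty, let R = max_{j∈A} r_j^f and assume R > 0. Let A' = {j ∈ A : r_j^f = R} and S' = {i ∈ S : f_{ij} > 0 for some j ∈ A'}. Then the total value of the securities in S' equals the total flow into A': ∑_{i∈S'} v_i = (1 − R) · ∑_{j∈A'} e_j. -/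
open Finset
open scoped Classical

variable {S A : Type*} [Fintype S] [Fintype A]

/-- the total value of the securities in `S'` equals the total
flow into the least-secured accounts `A'`. -/
theorem Sprime_value_eq_Aprime_inflow [Nonempty A] (E : Finset (S × A)) (v : S → ℝ) (e : A → ℝ)
    (hv : ∀ i, 0 ≤ v i) (he : ∀ j, 0 < e j)
    (f : S → A → ℝ) (hf : RatioBalanced E v e f)
    (R : ℝ) (hRdef : R = Finset.univ.sup' Finset.univ_nonempty (riskRatio E e f))
    (hRpos : 0 < R) :
    ∑ i ∈ Finset.univ.filter
        (fun i : S => ∃ j : A, riskRatio E e f j = R ∧ 0 < f i j), v i =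
      (1 - R) * ∑ j ∈ Finset.univ.filter (fun j : A => riskRatio E e f j = R), e j := by

  classical
  obtain ⟨⟨⟨hnn, hzero, hout, hin⟩, hmax⟩, hrc⟩ := hf
  have hfnn : ∀ i j, 0 ≤ f i j := fun i j => by
    by_cases h : (i, j) ∈ E
    · exact hnn i j h
    · rw [hzero i j h]
  have hRle : ∀ j, riskRatio E e f j ≤ R := fun j => by
    rw [hRdef]; exact Finset.le_sup' _ (mem_univ j)
  have hposE : ∀ i j, 0 < f i j → (i, j) ∈ E := by
    intro i j hp
    by_contra h
    rw [hzero i j h] at hp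
    exact lt_irrefl 0 hp
  have hinfull : ∀ j, ∑ i ∈ Finset.univ.filter (fun i => (i, j) ∈ E), f i j = ∑ i, f i j := by
    intro j
    refine Finset.sum_subset (Finset.filter_subset _ _) (fun i _ hi => ?_)
    simp only [Finset.mem_filter, Finset.mem_univ, true_and] at hi
    exact hzero i j hi
  have houtfull : ∀ i, ∑ j ∈ Finset.univ.filter (fun j => (i, j) ∈ E), f i j = ∑ j, f i j := by
    intro i
    refine Finset.sum_subset (Finset.filter_subset _ _) (fun j _ hj => ?_)
    simp only [Finset.mem_filter, Finset.mem_univ, true_and] at hj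
    exact hzero i j hj
  have hinflow : ∀ j, riskRatio E e f j = R → ∑ i, f i j = (1 - R) * e j := by
    intro j hj
    rw [riskRatio, hinfull] at hj
    have hej := (he j).ne'
    field_simp at hj
    linarith
  -- all flow from a security in S' goes to A'
  have hflowA' : ∀ i j₀ j, riskRatio E e f j₀ = R → 0 < f i j₀ → 0 < f i j →
      riskRatio E e f j = R := by
    intro i j₀ j h0 hp hp2
    have h1 := hrc i j j₀ (hposE i j hp2) hp2 (hposE i j₀ hp)
    have h2 := hRle j
    linarith [h0 ▸ h1]
  -- saturation
  have hsat : ∀ i j₀, riskRatio E e f j₀ = R → 0 < f i j₀ → ∑ j, f i j = v i := by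
    intro i j₀ h0 hp
    have hE0 : (i, j₀) ∈ E := hposE i j₀ hp
    refine le_antisymm (by rw [← houtfull i]; exact hout i) ?_
    by_contra h
    push_neg at h
    set ε := min (v i - ∑ j, f i j) (R * e j₀) with hε
    have hεpos : 0 < ε := lt_min (by linarith) (mul_pos hRpos (he j₀))
    set g : S → A → ℝ := fun a b => f a b + (if (a, b) = (i, j₀) then ε else 0) with hg
    have hinfl0 : ∑ a, f a j₀ = (1 - R) * e j₀ := hinflow j₀ h0
    have hgfeas : Feasible E v e g := by
      refine ⟨?_, ?_, ?_, ?_⟩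
      · intro a b hab
        have h1 := hfnn a b
        simp only [hg]
        split_ifs <;> linarith
      · intro a b hab
        have hne : (a, b) ≠ (i, j₀) := fun hc => hab (hc ▸ hE0)
        simp only [hg, if_neg hne, add_zero]
        exact hzero a b hab
      · intro a
        by_cases ha : a = i
        · rw [ha]
          have hsum : ∑ j ∈ Finset.univ.filter (fun j => (i, j) ∈ E), g i j
              = (∑ j ∈ Finset.univ.filter (fun j => (i, j) ∈ E), f i j) + ε := by
            simp only [hg, Prod.mk.injEq, eq_self_iff_true, true_and]
            rw [Finset.sum_add_distrib, Finset.sum_ite_eq' _ j₀ (fun _ => ε)]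
            simp [hE0]
          rw [hsum, houtfull]
          have hle : ε ≤ v i - ∑ j, f i j := min_le_left _ _
          linarith
        · have hsum : ∑ j ∈ Finset.univ.filter (fun j => (a, j) ∈ E), g a j
              = ∑ j ∈ Finset.univ.filter (fun j => (a, j) ∈ E), f a j := by
            refine Finset.sum_congr rfl (fun j _ => ?_)
            simp [hg, Prod.mk.injEq, ha]
          rw [hsum]; exact hout a
      · intro b
        by_cases hb : b = j₀
        · rw [hb]
          have hsum : ∑ a ∈ Finset.univ.filter (fun a => (a, j₀) ∈ E), g a j₀
              = (∑ a ∈ Finset.univ.filter (fun a => (a, j₀) ∈ E), f a j₀) + ε := by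
            simp only [hg, Prod.mk.injEq, eq_self_iff_true, and_true]
            rw [Finset.sum_add_distrib, Finset.sum_ite_eq' _ i (fun _ => ε)]
            simp [hE0]
          rw [hsum, hinfull, hinfl0]
          have hle : ε ≤ R * e j₀ := min_le_right _ _
          linarith
        · have hsum : ∑ a ∈ Finset.univ.filter (fun a => (a, b) ∈ E), g a b
              = ∑ a ∈ Finset.univ.filter (fun a => (a, b) ∈ E), f a b := by
            refine Finset.sum_congr rfl (fun a _ => ?_)
            simp [hg, Prod.mk.injEq, hb]
          rw [hsum]; exact hin b
    have hle := hmax g hgfeas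
    have hval : flowValue E g = flowValue E f + ε := by
      unfold flowValue
      simp only [hg]
      rw [Finset.sum_add_distrib]
      have : ∑ p ∈ E, (if (p.1, p.2) = (i, j₀) then ε else 0) = ε := by
        have hre : ∀ p : S × A, ((p.1, p.2) = (i, j₀)) = (p = (i, j₀)) := fun p => by
          simp
        simp only [hre]
        rw [Finset.sum_ite_eq' E (i, j₀) (fun _ => ε)]
        simp [hE0]
      rw [this]
    rw [hval] at hle
    linarith
  -- main computation
  calc ∑ i ∈ Finset.univ.filter
        (fun i : S => ∃ j : A, riskRatio E e f j = R ∧ 0 < f i j), v i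
      = ∑ i ∈ Finset.univ.filter
        (fun i : S => ∃ j : A, riskRatio E e f j = R ∧ 0 < f i j),
          ∑ j ∈ Finset.univ.filter (fun j : A => riskRatio E e f j = R), f i j := by
        refine Finset.sum_congr rfl (fun i hi => ?_)
        simp only [Finset.mem_filter, Finset.mem_univ, true_and] at hi
        obtain ⟨j₀, hj₀, hp⟩ := hi
        rw [← hsat i j₀ hj₀ hp]
        refine Finset.sum_subset (Finset.filter_subset _ _) (fun j _ hj => ?_) |>.symm
        simp only [Finset.mem_filter, Finset.mem_univ, true_and] at hj
        by_contra hne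
        have hpos : 0 < f i j := lt_of_le_of_ne (hfnn i j) (Ne.symm hne)
        exact hj (hflowA' i j₀ j hj₀ hp hpos)
    _ = ∑ j ∈ Finset.univ.filter (fun j : A => riskRatio E e f j = R),
          ∑ i ∈ Finset.univ.filter
            (fun i : S => ∃ j : A, riskRatio E e f j = R ∧ 0 < f i j), f i j :=
        Finset.sum_comm
    _ = ∑ j ∈ Finset.univ.filter (fun j : A => riskRatio E e f j = R), (1 - R) * e j := by
        refine Finset.sum_congr rfl (fun j hj => ?_)
        simp only [Finset.mem_filter, Finset.mem_univ, true_and] at hj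
        rw [← hinflow j hj]
        refine Finset.sum_subset (Finset.subset_univ _) (fun i _ hi => ?_)
        simp only [Finset.mem_filter, Finset.mem_univ, true_and] at hi
        by_contra hne
        have hpos : 0 < f i j := lt_of_le_of_ne (hfnn i j) (Ne.symm hne)
        exact hi ⟨j, hj, hpos⟩
    _ = (1 - R) * ∑ j ∈ Finset.univ.filter (fun j : A => riskRatio E e f j = R), e j :=
        (Finset.mul_sum _ _ _).symm
end

section
/- Let f and g be ratio-balanced maximum flows, assume A is nonempty, let R = max_{j∈A} r_j^f, assume R > 0 and max_{j∈A} r_j^g ≤ R. Then for every account j with r_j^f = R one also has r_j^g = R. -/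
open Finset
open scoped Classical

variable {S A : Type*} [Fintype S] [Fintype A]

lemma sum_filter_eq_sum_univ (E : Finset (S × A)) (h : S → A → ℝ)
    (hz : ∀ i j, (i, j) ∉ E → h i j = 0) (j : A) :
    ∑ i ∈ Finset.univ.filter (fun i => (i, j) ∈ E), h i j = ∑ i : S, h i j := by
  rw [Finset.sum_filter]
  refine Finset.sum_congr rfl fun i _ => ?_
  by_cases hij : (i, j) ∈ E <;> simp [hij, hz i j]

lemma sum_filter_eq_sum_univ' (E : Finset (S × A)) (h : S → A → ℝ)
    (hz : ∀ i j, (i, j) ∉ E → h i j = 0) (i : S) :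
    ∑ j ∈ Finset.univ.filter (fun j => (i, j) ∈ E), h i j = ∑ j : A, h i j := by
  rw [Finset.sum_filter]
  refine Finset.sum_congr rfl fun j _ => ?_
  by_cases hij : (i, j) ∈ E <;> simp [hij, hz i j]

/-- if `f` and `g` are ratio-balanced, `R = max_j r_j^f > 0` and
all risk ratios of `g` are at most `R`, then `r_j^g = R` whenever `r_j^f = R`. -/
theorem maxRatio_agree [Nonempty A] (E : Finset (S × A)) (v : S → ℝ) (e : A → ℝ)
    (hv : ∀ i, 0 ≤ v i) (he : ∀ j, 0 < e j)
    (f g : S → A → ℝ) (hf : RatioBalanced E v e f) (hg : RatioBalanced E v e g)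
    (R : ℝ) (hRdef : R = Finset.univ.sup' Finset.univ_nonempty (riskRatio E e f))
    (hRpos : 0 < R)
    (hgR : Finset.univ.sup' Finset.univ_nonempty (riskRatio E e g) ≤ R) :
    ∀ j : A, riskRatio E e f j = R → riskRatio E e g j = R := by
  classical
  obtain ⟨⟨⟨hf0, hfz, hfv, hfe⟩, hfMax⟩, hfRatio⟩ := hf
  obtain ⟨⟨⟨hg0, hgz, hgv, hge⟩, hgMax⟩, hgRatio⟩ := hg
  have hfle : ∀ j, riskRatio E e f j ≤ R := fun j =>
    hRdef ▸ Finset.le_sup' (riskRatio E e f) (Finset.mem_univ j)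
  have hgle : ∀ j, riskRatio E e g j ≤ R := fun j =>
    le_trans (Finset.le_sup' (riskRatio E e g) (Finset.mem_univ j)) hgR
  have hg0' : ∀ i j, 0 ≤ g i j := by
    intro i j; by_cases h : (i, j) ∈ E
    · exact hg0 i j h
    · simp [hgz i j h]
  have hf0' : ∀ i j, 0 ≤ f i j := by
    intro i j; by_cases h : (i, j) ∈ E
    · exact hf0 i j h
    · simp [hfz i j h]
  set T : Finset A := Finset.univ.filter (fun j => riskRatio E e f j = R) with hT
  set N : Finset S := Finset.univ.filter (fun i => ∃ j ∈ T, (i, j) ∈ E) with hN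
  -- slack at accounts in T
  have hslack : ∀ j ∈ T, ∑ i ∈ Finset.univ.filter (fun i => (i, j) ∈ E), f i j < e j := by
    intro j hj
    have hjR : riskRatio E e f j = R := (Finset.mem_filter.mp hj).2
    have hej := he j
    unfold riskRatio at hjR
    have : e j - ∑ i ∈ Finset.univ.filter (fun i => (i, j) ∈ E), f i j = R * e j := by
      field_simp at hjR; linarith
    nlinarith
  -- saturation of securities in N
  have hsat : ∀ i ∈ N, ∑ j ∈ Finset.univ.filter (fun j => (i, j) ∈ E), f i j = v i := by
    intro i hi
    by_contra hne
    have hlt : ∑ j ∈ Finset.univ.filter (fun j => (i, j) ∈ E), f i j < v i :=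
      lt_of_le_of_ne (hfv i) hne
    obtain ⟨j0, hj0T, hij0⟩ := (Finset.mem_filter.mp hi).2
    have hin : ∑ i' ∈ Finset.univ.filter (fun i' => (i', j0) ∈ E), f i' j0 < e j0 :=
      hslack j0 hj0T
    set ε : ℝ := min (v i - ∑ j ∈ Finset.univ.filter (fun j => (i, j) ∈ E), f i j)
        (e j0 - ∑ i' ∈ Finset.univ.filter (fun i' => (i', j0) ∈ E), f i' j0) with hε
    have hεpos : 0 < ε := lt_min (by linarith) (by linarith)
    set f' : S → A → ℝ := fun i' j' => f i' j' + (if (i', j') = (i, j0) then ε else 0) with hf'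
    have hrow : ∀ i' : S, ∑ j ∈ Finset.univ.filter (fun j => (i', j) ∈ E), f' i' j
        = (∑ j ∈ Finset.univ.filter (fun j => (i', j) ∈ E), f i' j)
          + (if i' = i then ε else 0) := by
      intro i'
      rw [show (∑ j ∈ Finset.univ.filter (fun j => (i', j) ∈ E), f' i' j)
          = (∑ j ∈ Finset.univ.filter (fun j => (i', j) ∈ E), f i' j)
            + ∑ j ∈ Finset.univ.filter (fun j => (i', j) ∈ E),
              (if (i', j) = (i, j0) then ε else 0) from by
        rw [← Finset.sum_add_distrib]]
      congr 1
      by_cases hii : i' = i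
      · subst hii
        simp only [Prod.mk.injEq, true_and]
        rw [Finset.sum_ite_eq' (Finset.univ.filter (fun j => (i', j) ∈ E)) j0 (fun _ => ε)]
        simp [hij0]
      · simp only [Prod.mk.injEq, hii, false_and, if_false]
        simp
    have hcol : ∀ j' : A, ∑ i' ∈ Finset.univ.filter (fun i' => (i', j') ∈ E), f' i' j'
        = (∑ i' ∈ Finset.univ.filter (fun i' => (i', j') ∈ E), f i' j')
          + (if j' = j0 then ε else 0) := by
      intro j'
      rw [show (∑ i' ∈ Finset.univ.filter (fun i' => (i', j') ∈ E), f' i' j')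
          = (∑ i' ∈ Finset.univ.filter (fun i' => (i', j') ∈ E), f i' j')
            + ∑ i' ∈ Finset.univ.filter (fun i' => (i', j') ∈ E),
              (if (i', j') = (i, j0) then ε else 0) from by
        rw [← Finset.sum_add_distrib]]
      congr 1
      by_cases hjj : j' = j0
      · subst hjj
        simp only [Prod.mk.injEq, and_true]
        rw [Finset.sum_ite_eq' (Finset.univ.filter (fun i' => (i', j') ∈ E)) i (fun _ => ε)]
        simp [hij0]
      · simp only [Prod.mk.injEq, hjj, and_false, if_false]
        simp
    have hfeas' : Feasible E v e f' := by
      refine ⟨?_, ?_, ?_, ?_⟩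
      · intro i' j' _
        have h1 := hf0' i' j'
        simp only [hf']
        split_ifs <;> linarith
      · intro i' j' hnotE
        have h : (i', j') ≠ (i, j0) := by
          intro heq; rw [heq] at hnotE; exact hnotE hij0
        simp only [hf', if_neg h, add_zero]
        exact hfz i' j' hnotE
      · intro i'
        rw [hrow i']
        by_cases hii : i' = i
        · subst hii
          have : ε ≤ v i' - ∑ j ∈ Finset.univ.filter (fun j => (i', j) ∈ E), f i' j :=
            min_le_left _ _
          rw [if_pos rfl]; linarith
        · simp only [if_neg hii, add_zero]; exact hfv i'
      · intro j'
        rw [hcol j']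
        by_cases hjj : j' = j0
        · subst hjj
          have : ε ≤ e j' - ∑ i' ∈ Finset.univ.filter (fun i' => (i', j') ∈ E), f i' j' :=
            min_le_right _ _
          rw [if_pos rfl]; linarith
        · simp only [if_neg hjj, add_zero]; exact hfe j'
    have hval : flowValue E f' = flowValue E f + ε := by
      unfold flowValue
      rw [show (∑ p ∈ E, f' p.1 p.2)
          = (∑ p ∈ E, f p.1 p.2) + ∑ p ∈ E, (if (p.1, p.2) = (i, j0) then ε else 0) from by
        rw [← Finset.sum_add_distrib]]
      congr 1
      rw [show (∑ p ∈ E, (if (p.1, p.2) = (i, j0) then ε else 0))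
          = ∑ p ∈ E, (if p = (i, j0) then ε else 0) from by
        refine Finset.sum_congr rfl fun p _ => ?_; congr 1]
      rw [Finset.sum_ite_eq' E (i, j0) (fun _ => ε)]
      simp [hij0]
    have := hfMax f' hfeas'
    rw [hval] at this
    linarith
  -- flow out of N under f goes into T
  have hzeroT : ∀ i ∈ N, ∀ l, l ∉ T → f i l = 0 := by
    intro i hi l hl
    by_cases hil : (i, l) ∈ E
    · by_contra hne
      have hpos : 0 < f i l := lt_of_le_of_ne (hf0' i l) (Ne.symm hne)
      obtain ⟨j0, hj0T, hij0⟩ := (Finset.mem_filter.mp hi).2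
      have hj0R : riskRatio E e f j0 = R := (Finset.mem_filter.mp hj0T).2
      have := hfRatio i l j0 hil hpos hij0
      have hlR : riskRatio E e f l = R := le_antisymm (hfle l) (hj0R ▸ this)
      exact hl (Finset.mem_filter.mpr ⟨Finset.mem_univ l, hlR⟩)
    · exact hfz i l hil
  -- total inflow into T under f
  have hsumf : ∑ j ∈ T, (∑ i ∈ Finset.univ.filter (fun i => (i, j) ∈ E), f i j)
      = ∑ i ∈ N, v i := by
    calc ∑ j ∈ T, (∑ i ∈ Finset.univ.filter (fun i => (i, j) ∈ E), f i j)
        = ∑ j ∈ T, ∑ i : S, f i j := by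
          exact Finset.sum_congr rfl fun j _ => sum_filter_eq_sum_univ E f hfz j
      _ = ∑ i : S, ∑ j ∈ T, f i j := Finset.sum_comm
      _ = ∑ i ∈ N, ∑ j ∈ T, f i j := by
          refine (Finset.sum_subset (Finset.subset_univ N) ?_).symm
          intro i _ hiN
          refine Finset.sum_eq_zero fun j hjT => ?_
          by_cases hij : (i, j) ∈ E
          · exact absurd (Finset.mem_filter.mpr ⟨Finset.mem_univ i, ⟨j, hjT, hij⟩⟩) hiN
          · exact hfz i j hij
      _ = ∑ i ∈ N, v i := by
          refine Finset.sum_congr rfl fun i hi => ?_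
          calc ∑ j ∈ T, f i j = ∑ j : A, f i j := by
                refine Finset.sum_subset (Finset.subset_univ T) ?_
                intro j _ hjT; exact hzeroT i hi j hjT
            _ = ∑ j ∈ Finset.univ.filter (fun j => (i, j) ∈ E), f i j :=
                (sum_filter_eq_sum_univ' E f hfz i).symm
            _ = v i := hsat i hi
  -- total inflow into T under g is at most the same
  have hsumg : ∑ j ∈ T, (∑ i ∈ Finset.univ.filter (fun i => (i, j) ∈ E), g i j)
      ≤ ∑ i ∈ N, v i := by
    calc ∑ j ∈ T, (∑ i ∈ Finset.univ.filter (fun i => (i, j) ∈ E), g i j)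
        = ∑ j ∈ T, ∑ i : S, g i j := by
          exact Finset.sum_congr rfl fun j _ => sum_filter_eq_sum_univ E g hgz j
      _ = ∑ i : S, ∑ j ∈ T, g i j := Finset.sum_comm
      _ = ∑ i ∈ N, ∑ j ∈ T, g i j := by
          refine (Finset.sum_subset (Finset.subset_univ N) ?_).symm
          intro i _ hiN
          refine Finset.sum_eq_zero fun j hjT => ?_
          by_cases hij : (i, j) ∈ E
          · exact absurd (Finset.mem_filter.mpr ⟨Finset.mem_univ i, ⟨j, hjT, hij⟩⟩) hiN
          · exact hgz i j hij
      _ ≤ ∑ i ∈ N, v i := by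
          refine Finset.sum_le_sum fun i hi => ?_
          calc ∑ j ∈ T, g i j ≤ ∑ j : A, g i j :=
                Finset.sum_le_sum_of_subset_of_nonneg (Finset.subset_univ T)
                  (fun j _ _ => hg0' i j)
            _ = ∑ j ∈ Finset.univ.filter (fun j => (i, j) ∈ E), g i j :=
                (sum_filter_eq_sum_univ' E g hgz i).symm
            _ ≤ v i := hgv i
  -- conclusion
  have hterm : ∀ j ∈ T, e j * (R - riskRatio E e g j)
      = (∑ i ∈ Finset.univ.filter (fun i => (i, j) ∈ E), g i j)
        - (∑ i ∈ Finset.univ.filter (fun i => (i, j) ∈ E), f i j) := by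
    intro j hj
    have hjR : riskRatio E e f j = R := (Finset.mem_filter.mp hj).2
    have hej := he j
    unfold riskRatio at hjR ⊢
    field_simp at hjR ⊢
    nlinarith [hjR]
  have hkey : ∑ j ∈ T, e j * (R - riskRatio E e g j) ≤ 0 := by
    rw [Finset.sum_congr rfl hterm, Finset.sum_sub_distrib, hsumf]
    linarith
  have hnn : ∀ j ∈ T, 0 ≤ e j * (R - riskRatio E e g j) := fun j _ =>
    mul_nonneg (le_of_lt (he j)) (by linarith [hgle j])
  have hall : ∀ j ∈ T, e j * (R - riskRatio E e g j) = 0 := by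
    intro j hj
    have hsum0 : ∑ j ∈ T, e j * (R - riskRatio E e g j) = 0 :=
      le_antisymm hkey (Finset.sum_nonneg hnn)
    exact (Finset.sum_eq_zero_iff_of_nonneg hnn).mp hsum0 j hj
  intro j hjR
  have hjT : j ∈ T := Finset.mem_filter.mpr ⟨Finset.mem_univ j, hjR⟩
  have := hall j hjT
  have hej := he j
  have : R - riskRatio E e g j = 0 := by
    rcases mul_eq_zero.mp this with h | h
    · linarith
    · exact h
  linarith
end

section
/- Suppose the values and exposures are integers: v_i ∈ ℕ for all i ∈ S, e_j ∈ ℕ with e_j ≥ 1 for all j ∈ A, all bounded by M ∈ ℕ; let n = |S| + |A|. If f is a ratio-balanced maximum flow, then for every account j ∈ A the risk ratio r_j^f is a rational number expressible as p/q with natural numbers p, q satisfying p ≤ n·M and 1 ≤ q ≤ n·M. -/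
open Finset
open scoped Classical

variable {S A : Type*} [Fintype S] [Fintype A]

/-- with integral values and exposures bounded by `M`, every risk
ratio of a ratio-balanced flow is a fraction `p / q` with `p ≤ n·M` and
`1 ≤ q ≤ n·M`, where `n = |S| + |A|`. -/
theorem riskRatio_rational (E : Finset (S × A)) (v : S → ℝ) (e : A → ℝ) (M : ℕ)
    (hv : ∀ i, ∃ k : ℕ, v i = (k : ℝ) ∧ k ≤ M)
    (he : ∀ j, ∃ k : ℕ, e j = (k : ℝ) ∧ 1 ≤ k ∧ k ≤ M)
    (f : S → A → ℝ) (hf : RatioBalanced E v e f) :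
    ∀ j : A, ∃ p q : ℕ,
      p ≤ (Fintype.card S + Fintype.card A) * M ∧
      1 ≤ q ∧ q ≤ (Fintype.card S + Fintype.card A) * M ∧
      riskRatio E e f j = (p : ℝ) / (q : ℝ) := by
  intro j
  obtain ⟨⟨⟨hpos, hzero, hout, hin⟩, hmax⟩, hratio⟩ := hf
  choose ke hke hke1 hkeM using he
  choose kv hkv hkvM using hv
  have hM1 : 1 ≤ M := le_trans (hke1 j) (hkeM j)
  have hepos : ∀ l, (0:ℝ) < e l := by
    intro l; rw [hke l]; exact_mod_cast hke1 l
  -- rewrite filtered sums as full sums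
  have hin_eq : ∀ l, ∑ i ∈ Finset.univ.filter (fun i => (i, l) ∈ E), f i l
      = ∑ i : S, f i l := by
    intro l; rw [Finset.sum_filter]
    refine Finset.sum_congr rfl fun i _ => ?_
    by_cases h : (i, l) ∈ E
    · rw [if_pos h]
    · rw [if_neg h, hzero i l h]
  have hout_eq : ∀ i, ∑ l ∈ Finset.univ.filter (fun l => (i, l) ∈ E), f i l
      = ∑ l : A, f i l := by
    intro i; rw [Finset.sum_filter]
    refine Finset.sum_congr rfl fun l _ => ?_
    by_cases h : (i, l) ∈ E
    · rw [if_pos h]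
    · rw [if_neg h, hzero i l h]
  set r := riskRatio E e f j with hrdef
  have hr0 : 0 ≤ r := by
    have := hin j
    exact div_nonneg (by linarith) (hepos j).le
  have hnM1 : 1 ≤ (Fintype.card S + Fintype.card A) * M := by
    have hA : 1 ≤ Fintype.card A := Fintype.card_pos_iff.2 ⟨j⟩
    calc 1 = 1 * 1 := by ring
    _ ≤ (Fintype.card S + Fintype.card A) * M :=
        Nat.mul_le_mul (by omega) hM1
  rcases eq_or_lt_of_le hr0 with h0 | hrpos
  · exact ⟨0, 1, by omega, le_refl 1, hnM1, by rw [← h0]; norm_num⟩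
  -- main case : r > 0
  set C : Finset A := Finset.univ.filter (fun l => riskRatio E e f l = r) with hCdef
  set D : Finset S := Finset.univ.filter
    (fun i => ∃ l ∈ C, (i, l) ∈ E ∧ 0 < f i l) with hDdef
  have hjC : j ∈ C := by simp [hCdef, hrdef]
  have hCr : ∀ l ∈ C, riskRatio E e f l = r := by
    intro l hl; exact (Finset.mem_filter.1 hl).2
  -- flow from a security in D only goes to accounts in C
  have hDflow : ∀ i ∈ D, ∀ l : A, f i l ≠ 0 → l ∈ C := by
    intro i hi l hl
    obtain ⟨l0, hl0C, hl0E, hl0pos⟩ := (Finset.mem_filter.1 hi).2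
    have hlE : (i, l) ∈ E := by
      by_contra h; exact hl (hzero i l h)
    have hlpos : 0 < f i l := lt_of_le_of_ne (hpos i l hlE) (Ne.symm hl)
    have h1 := hratio i l l0 hlE hlpos hl0E
    have h2 := hratio i l0 l hl0E hl0pos hlE
    have hr0' := hCr l0 hl0C
    refine Finset.mem_filter.2 ⟨Finset.mem_univ l, ?_⟩
    rw [hr0'] at h1 h2
    linarith
  -- securities in D are saturated
  have hDsat : ∀ i ∈ D, ∑ l : A, f i l = v i := by
    intro i hi
    obtain ⟨l0, hl0C, hl0E, hl0pos⟩ := (Finset.mem_filter.1 hi).2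
    by_contra hne
    have hlt : ∑ l : A, f i l < v i :=
      lt_of_le_of_ne (by rw [← hout_eq i]; exact hout i) hne
    -- l0 has slack
    have hrl0 := hCr l0 hl0C
    have hslack : ∑ i' : S, f i' l0 < e l0 := by
      have h1 : (e l0 - ∑ i' ∈ Finset.univ.filter (fun i' => (i', l0) ∈ E), f i' l0)
          = r * e l0 := by
        have := hrl0
        unfold riskRatio at this
        rw [div_eq_iff (hepos l0).ne'] at this
        linarith [this]
      rw [hin_eq l0] at h1
      nlinarith [hepos l0]
    set ε : ℝ := min (v i - ∑ l : A, f i l) (e l0 - ∑ i' : S, f i' l0) with hεdef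
    have hεpos : 0 < ε := lt_min (by linarith) (by linarith)
    set g : S → A → ℝ := fun a b => f a b + if a = i ∧ b = l0 then ε else 0 with hgdef
    have hg_sum_out : ∀ a : S, ∑ b ∈ Finset.univ.filter (fun b => (a, b) ∈ E), g a b
        = (∑ b ∈ Finset.univ.filter (fun b => (a, b) ∈ E), f a b)
          + if a = i then ε else 0 := by
      intro a
      rw [Finset.sum_add_distrib]
      congr 1
      by_cases ha : a = i
      · subst ha
        rw [if_pos rfl]
        rw [Finset.sum_eq_single l0]
        · simp
        · intro b _ hbne
          rw [if_neg (by tauto)]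
        · intro h
          exact absurd (by simpa using hl0E) h
      · rw [if_neg ha]
        apply Finset.sum_eq_zero
        intro b _
        rw [if_neg (by tauto)]
    have hg_sum_in : ∀ b : A, ∑ a ∈ Finset.univ.filter (fun a => (a, b) ∈ E), g a b
        = (∑ a ∈ Finset.univ.filter (fun a => (a, b) ∈ E), f a b)
          + if b = l0 then ε else 0 := by
      intro b
      rw [Finset.sum_add_distrib]
      congr 1
      by_cases hb : b = l0
      · subst hb
        rw [if_pos rfl]
        rw [Finset.sum_eq_single i]
        · simp
        · intro a _ hane
          rw [if_neg (by tauto)]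
        · intro h
          exact absurd (by simpa using hl0E) h
      · rw [if_neg hb]
        apply Finset.sum_eq_zero
        intro a _
        rw [if_neg (by tauto)]
    have hgfeas : Feasible E v e g := by
      refine ⟨?_, ?_, ?_, ?_⟩
      · intro a b hab
        have := hpos a b hab
        have : (0:ℝ) ≤ if a = i ∧ b = l0 then ε else 0 := by positivity
        simp only [hgdef]
        have := hpos a b hab
        linarith
      · intro a b hab
        simp only [hgdef]
        rw [hzero a b hab, if_neg]
        · ring
        · rintro ⟨rfl, rfl⟩; exact hab hl0E
      · intro a
        rw [hg_sum_out a]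
        by_cases ha : a = i
        · subst ha
          rw [if_pos rfl, hout_eq]
          have h5 : ε ≤ v a - ∑ l : A, f a l := min_le_left _ _
          linarith
        · rw [if_neg ha]
          simpa using hout a
      · intro b
        rw [hg_sum_in b]
        by_cases hb : b = l0
        · subst hb
          rw [if_pos rfl, hin_eq]
          have h5 : ε ≤ e b - ∑ i' : S, f i' b := min_le_right _ _
          linarith
        · rw [if_neg hb]
          simpa using hin b
    have hval : flowValue E g = flowValue E f + ε := by
      unfold flowValue
      simp only [hgdef]
      rw [Finset.sum_add_distrib]
      congr 1
      rw [Finset.sum_eq_single (i, l0)]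
      · simp
      · intro p hp hpne
        rw [if_neg]
        intro ⟨h1, h2⟩
        exact hpne (by rw [Prod.ext_iff]; exact ⟨h1, h2⟩)
      · intro h; exact absurd hl0E h
    have := hmax g hgfeas
    rw [hval] at this
    linarith
  -- inflow into C equals total value of D
  have hflowsum : ∑ l ∈ C, ∑ i : S, f i l = ∑ i ∈ D, v i := by
    rw [Finset.sum_comm]
    rw [← Finset.sum_filter_add_sum_filter_not Finset.univ
      (fun i => i ∈ D) (fun i => ∑ l ∈ C, f i l)]
    have h2 : ∑ i ∈ Finset.univ.filter (fun i => i ∉ D), ∑ l ∈ C, f i l = 0 := by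
      apply Finset.sum_eq_zero
      intro i hi
      apply Finset.sum_eq_zero
      intro l hl
      by_contra hne
      have hlE : (i, l) ∈ E := by by_contra h; exact hne (hzero i l h)
      have : i ∈ D := Finset.mem_filter.2 ⟨Finset.mem_univ i,
        ⟨l, hl, hlE, lt_of_le_of_ne (hpos i l hlE) (Ne.symm hne)⟩⟩
      exact (Finset.mem_filter.1 hi).2 this
    rw [h2, add_zero]
    have h3 : Finset.univ.filter (fun i => i ∈ D) = D := by
      ext i; simp
    rw [h3]
    apply Finset.sum_congr rfl
    intro i hi
    rw [← hDsat i hi]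
    rw [← Finset.sum_filter_add_sum_filter_not Finset.univ
      (fun l => l ∈ C) (fun l => f i l)]
    have h4 : ∑ l ∈ Finset.univ.filter (fun l => l ∉ C), f i l = 0 := by
      apply Finset.sum_eq_zero
      intro l hl
      by_contra hne
      exact (Finset.mem_filter.1 hl).2 (hDflow i hi l hne)
    have h5 : Finset.univ.filter (fun l => l ∈ C) = C := by
      ext l; simp [hCdef]
    rw [h4, h5, add_zero]
  -- key identity : r * (∑_C e) = ∑_C e - ∑_D v
  have hkey : r * (∑ l ∈ C, e l) = (∑ l ∈ C, e l) - ∑ i ∈ D, v i := by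
    have h1 : ∀ l ∈ C, e l - ∑ i : S, f i l = r * e l := by
      intro l hl
      have := hCr l hl
      unfold riskRatio at this
      rw [hin_eq l] at this
      rw [div_eq_iff (hepos l).ne'] at this
      linarith
    have h2 : ∑ l ∈ C, (e l - ∑ i : S, f i l) = ∑ l ∈ C, r * e l :=
      Finset.sum_congr rfl h1
    rw [Finset.sum_sub_distrib, hflowsum, ← Finset.mul_sum] at h2
    linarith
  -- natural number data
  set q : ℕ := ∑ l ∈ C, ke l with hqdef
  set w : ℕ := ∑ i ∈ D, kv i with hwdef
  have hqe : (q : ℝ) = ∑ l ∈ C, e l := by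
    rw [hqdef]
    push_cast
    exact Finset.sum_congr rfl fun l _ => (hke l).symm
  have hwv : (w : ℝ) = ∑ i ∈ D, v i := by
    rw [hwdef]
    push_cast
    exact Finset.sum_congr rfl fun i _ => (hkv i).symm
  have hq1 : 1 ≤ q := le_trans (hke1 j)
    (Finset.single_le_sum (fun l _ => Nat.zero_le _) hjC)
  have hqpos : (0:ℝ) < q := by exact_mod_cast hq1
  have hwq : w ≤ q := by
    have : (w:ℝ) ≤ (q:ℝ) := by
      rw [hqe, hwv]
      have h0 : 0 ≤ r * ∑ l ∈ C, e l :=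
        mul_nonneg hr0 (by rw [← hqe]; exact hqpos.le)
      linarith [hkey, h0]
    exact_mod_cast this
  refine ⟨q - w, q, ?_, hq1, ?_, ?_⟩
  · have hqle : q ≤ Fintype.card A * M := by
      calc q ≤ ∑ _l ∈ C, M := Finset.sum_le_sum fun l _ => hkeM l
      _ = C.card * M := by rw [Finset.sum_const, smul_eq_mul]
      _ ≤ Fintype.card A * M := Nat.mul_le_mul_right M (Finset.card_le_univ C)
    exact le_trans (Nat.sub_le q w)
      (le_trans hqle (Nat.mul_le_mul_right M (by omega)))
  · have hqle : q ≤ Fintype.card A * M := by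
      calc q ≤ ∑ _l ∈ C, M := Finset.sum_le_sum fun l _ => hkeM l
      _ = C.card * M := by rw [Finset.sum_const, smul_eq_mul]
      _ ≤ Fintype.card A * M := Nat.mul_le_mul_right M (Finset.card_le_univ C)
    exact le_trans hqle (Nat.mul_le_mul_right M (by omega))
  · have hp : ((q - w : ℕ) : ℝ) = (q:ℝ) - (w:ℝ) := by
      push_cast [Nat.cast_sub hwq]
      ring
    rw [hp, eq_div_iff (ne_of_gt hqpos), hqe, hwv]
    linarith [hkey]
end

section
/- For λ ∈ [0,1], say the problem P_λ is feasible if there exists a flow f (f_{ij} ≥ 0 on edges of E) with ∑_{j : (i,j)∈E} f_{ij} ≤ v_i for every i ∈ S and ∑_{i : (i,j)∈E} f_{ij} = λ·e_j for every j ∈ A. Assume A is nonempty and let λ* = sup{λ ∈ [0,1] : P_λ is feasible} (P_0 is feasible, so the supremum exists). Then for every ratio-balanced maximum flow f, max_{j∈A} r_j^f = 1 − λ*. -/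
open Finset
open scoped Classical

variable {S A : Type*} [Fintype S] [Fintype A]

/-- The parameterized flow problem `P_λ`: a flow respecting the value
constraints whose inflow into every account `j` is exactly `λ · e j`. -/
def PFeasible (E : Finset (S × A)) (v : S → ℝ) (e : A → ℝ) (lam : ℝ) : Prop :=
  ∃ f : S → A → ℝ,
    (∀ i j, (i, j) ∈ E → 0 ≤ f i j) ∧
    (∀ i j, (i, j) ∉ E → f i j = 0) ∧
    (∀ i : S, ∑ j ∈ Finset.univ.filter (fun j => (i, j) ∈ E), f i j ≤ v i) ∧
    (∀ j : A, ∑ i ∈ Finset.univ.filter (fun i => (i, j) ∈ E), f i j = lam * e j)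

/-- for every ratio-balanced maximum flow, the maximum risk ratio
equals `1 - λ*`, where `λ*` is the supremum of the `λ ∈ [0,1]` with `P_λ` feasible. -/
theorem maxRiskRatio_eq_one_sub_lamStar [Nonempty A] (E : Finset (S × A)) (v : S → ℝ) (e : A → ℝ)
    (hv : ∀ i, 0 ≤ v i) (he : ∀ j, 0 < e j)
    (lamStar : ℝ)
    (hlam : lamStar = sSup {lam : ℝ | lam ∈ Set.Icc (0 : ℝ) 1 ∧ PFeasible E v e lam})
    (f : S → A → ℝ) (hf : RatioBalanced E v e f) :
    Finset.univ.sup' Finset.univ_nonempty (riskRatio E e f) = 1 - lamStar := by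
  classical
  obtain ⟨⟨⟨hpos, hzero, hout, hin⟩, hmax⟩, hratio⟩ := hf
  set I : A → ℝ := fun j => ∑ i ∈ Finset.univ.filter (fun i => (i, j) ∈ E), f i j with hI
  set R : ℝ := Finset.univ.sup' Finset.univ_nonempty (riskRatio E e f) with hRdef
  have hInn : ∀ j, 0 ≤ I j := fun j =>
    Finset.sum_nonneg fun i hi => hpos i j (by simpa using hi)
  have hIle : ∀ j, I j ≤ e j := hin
  have hrdef : ∀ j, riskRatio E e f j = (e j - I j) / e j := fun j => rfl
  have hr0 : ∀ j, 0 ≤ riskRatio E e f j := fun j => by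
    rw [hrdef]; exact div_nonneg (by linarith [hIle j]) (he j).le
  have hr1 : ∀ j, riskRatio E e f j ≤ 1 := fun j => by
    rw [hrdef, div_le_one (he j)]; linarith [hInn j]
  have hrR : ∀ j, riskRatio E e f j ≤ R := fun j => Finset.le_sup' _ (Finset.mem_univ j)
  obtain ⟨j0, -, hj0⟩ := Finset.exists_mem_eq_sup' (Finset.univ_nonempty (α := A))
    (riskRatio E e f)
  have hR0 : 0 ≤ R := by rw [hRdef, hj0]; exact hr0 j0
  have hR1 : R ≤ 1 := Finset.sup'_le _ _ fun j _ => hr1 j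
  have hIr : ∀ j, I j = (1 - riskRatio E e f j) * e j := fun j => by
    rw [hrdef, one_sub_div (he j).ne', div_mul_cancel₀ _ (he j).ne']; ring
  -- Part (a): 1 - R is feasible for the parametrized problem.
  have partA : PFeasible E v e (1 - R) := by
    refine ⟨fun i j => f i j * ((1 - R) * e j / I j), ?_, ?_, ?_, ?_⟩
    · intro i j hij
      exact mul_nonneg (hpos i j hij)
        (div_nonneg (mul_nonneg (by linarith) (he j).le) (hInn j))
    · intro i j hij
      show f i j * ((1 - R) * e j / I j) = 0
      rw [hzero i j hij]; ring
    · intro i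
      refine le_trans (Finset.sum_le_sum fun j hj => ?_) (hout i)
      show f i j * ((1 - R) * e j / I j) ≤ f i j
      by_cases h0 : I j = 0
      · rw [h0, div_zero, mul_zero]
        exact hpos i j (by simpa using hj)
      · have hle1 : (1 - R) * e j / I j ≤ 1 := by
          rw [div_le_one (lt_of_le_of_ne (hInn j) (Ne.symm h0))]
          have h2 := hrR j
          rw [hrdef, div_le_iff₀ (he j)] at h2
          nlinarith
        exact mul_le_of_le_one_right (hpos i j (by simpa using hj)) hle1
    · intro j
      show (∑ i ∈ Finset.univ.filter (fun i => (i, j) ∈ E),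
        f i j * ((1 - R) * e j / I j)) = (1 - R) * e j
      rw [← Finset.sum_mul]
      show I j * ((1 - R) * e j / I j) = (1 - R) * e j
      by_cases h0 : I j = 0
      · have hrj : riskRatio E e f j = 1 := by
          rw [hrdef, h0, sub_zero, div_self (he j).ne']
        have hR1' : R = 1 := le_antisymm hR1 (hrj ▸ hrR j)
        rw [h0, hR1']; ring
      · rw [mul_comm, div_mul_cancel₀ _ h0]
  -- Part (b): every feasible lam satisfies lam ≤ 1 - R.
  have partB : ∀ lam, lam ∈ Set.Icc (0 : ℝ) 1 → PFeasible E v e lam → lam ≤ 1 - R := by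
    rintro lam ⟨hl0, hl1⟩ ⟨g, hg0, hgz, hgout, hgin⟩
    rcases eq_or_lt_of_le hR0 with hReq | hRpos
    · linarith
    have hJ0 : riskRatio E e f j0 = R := hj0.symm
    set J : Finset A := Finset.univ.filter (fun j => riskRatio E e f j = R) with hJdef
    have hj0J : j0 ∈ J := by simp [hJdef, hJ0]
    set Sst : Finset S := Finset.univ.filter (fun i => ∃ j, j ∈ J ∧ (i, j) ∈ E) with hSdef
    have hmemS : ∀ i j, j ∈ J → (i, j) ∈ E → i ∈ Sst := by
      intro i j hj hij
      rw [hSdef]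
      simp only [Finset.mem_filter, Finset.mem_univ, true_and]
      exact ⟨j, hj, hij⟩
    have claim1 : ∀ i ∈ Sst, ∀ l, (i, l) ∈ E → f i l = 0 ∨ l ∈ J := by
      intro i hi l hl
      by_cases hfl : f i l = 0
      · exact Or.inl hfl
      right
      have hi' : ∃ j, j ∈ J ∧ (i, j) ∈ E := by simpa [hSdef] using hi
      obtain ⟨j, hjJ, hij⟩ := hi'
      have hflpos : 0 < f i l := lt_of_le_of_ne (hpos i l hl) (Ne.symm hfl)
      have h1 : riskRatio E e f j ≤ riskRatio E e f l := hratio i l j hl hflpos hij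
      have hjR : riskRatio E e f j = R := by simpa [hJdef] using hjJ
      have hlR : riskRatio E e f l = R := le_antisymm (hrR l) (hjR ▸ h1)
      simp [hJdef, hlR]
    have hIeq : ∀ j ∈ J, I j = (1 - R) * e j := fun j hj => by
      have hjR : riskRatio E e f j = R := by simpa [hJdef] using hj
      rw [hIr j, hjR]
    have hIlt : ∀ j ∈ J, I j < e j := fun j hj => by
      rw [hIeq j hj]; nlinarith [he j]
    -- Claim 2: every security in Sst is saturated.
    have claim2 : ∀ i ∈ Sst, ∑ j ∈ Finset.univ.filter (fun j => (i, j) ∈ E), f i j = v i := by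
      intro i hi
      by_contra hne
      have hlt : ∑ j ∈ Finset.univ.filter (fun j => (i, j) ∈ E), f i j < v i :=
        lt_of_le_of_ne (hout i) hne
      have hi' : ∃ j, j ∈ J ∧ (i, j) ∈ E := by simpa [hSdef] using hi
      obtain ⟨j, hjJ, hij⟩ := hi'
      set ε : ℝ := min (v i - ∑ j' ∈ Finset.univ.filter (fun j' => (i, j') ∈ E), f i j')
        (e j - I j) with hε
      have hεpos : 0 < ε := lt_min (by linarith) (by linarith [hIlt j hjJ])
      have hε1 : ε ≤ v i - ∑ j' ∈ Finset.univ.filter (fun j' => (i, j') ∈ E), f i j' :=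
        min_le_left _ _
      have hε2 : ε ≤ e j - I j := min_le_right _ _
      set f' : S → A → ℝ := fun i' j' => f i' j' + if (i', j') = (i, j) then ε else 0 with hf'
      have hrow : ∀ i', ∑ j' ∈ Finset.univ.filter (fun j' => (i', j') ∈ E), f' i' j'
          = (∑ j' ∈ Finset.univ.filter (fun j' => (i', j') ∈ E), f i' j')
            + (if i' = i then ε else 0) := by
        intro i'
        show ∑ j' ∈ Finset.univ.filter (fun j' => (i', j') ∈ E),
            (f i' j' + if (i', j') = (i, j) then ε else 0) = _
        rw [Finset.sum_add_distrib]
        congr 1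
        by_cases hi'' : i' = i
        · rw [hi'']
          simp only [Prod.mk.injEq, true_and]
          rw [Finset.sum_ite_eq' (Finset.univ.filter (fun j' => (i, j') ∈ E)) j (fun _ => ε)]
          simp [hij]
        · rw [if_neg hi'']
          refine Finset.sum_eq_zero fun j' _ => ?_
          rw [if_neg]
          simp [Prod.mk.injEq, hi'']
      have hcol : ∀ j', ∑ i' ∈ Finset.univ.filter (fun i' => (i', j') ∈ E), f' i' j'
          = (∑ i' ∈ Finset.univ.filter (fun i' => (i', j') ∈ E), f i' j')
            + (if j' = j then ε else 0) := by
        intro j'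
        show ∑ i' ∈ Finset.univ.filter (fun i' => (i', j') ∈ E),
            (f i' j' + if (i', j') = (i, j) then ε else 0) = _
        rw [Finset.sum_add_distrib]
        congr 1
        by_cases hj'' : j' = j
        · rw [hj'']
          simp only [Prod.mk.injEq, and_true]
          rw [Finset.sum_ite_eq' (Finset.univ.filter (fun i' => (i', j) ∈ E)) i (fun _ => ε)]
          simp [hij]
        · rw [if_neg hj'']
          refine Finset.sum_eq_zero fun i' _ => ?_
          rw [if_neg]
          simp [Prod.mk.injEq, hj'']
      have hfeas' : Feasible E v e f' := by
        refine ⟨?_, ?_, ?_, ?_⟩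
        · intro i' j' h
          have h2 : (0 : ℝ) ≤ if (i', j') = (i, j) then ε else 0 := by
            split
            · exact hεpos.le
            · exact le_rfl
          exact add_nonneg (hpos i' j' h) h2
        · intro i' j' h
          have hne' : (i', j') ≠ (i, j) := fun hcon => h (hcon ▸ hij)
          show f i' j' + (if (i', j') = (i, j) then ε else 0) = 0
          rw [hzero i' j' h, if_neg hne']; ring
        · intro i'
          rw [hrow i']
          by_cases hi'' : i' = i
          · rw [if_pos hi'', hi'']
            linarith
          · rw [if_neg hi'', add_zero]
            exact hout i'
        · intro j'
          rw [hcol j']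
          by_cases hj'' : j' = j
          · rw [if_pos hj'', hj'']
            have hIj : I j = ∑ i' ∈ Finset.univ.filter (fun i' => (i', j) ∈ E), f i' j := rfl
            linarith
          · rw [if_neg hj'', add_zero]
            exact hin j'
      have hval : flowValue E f' = flowValue E f + ε := by
        unfold flowValue
        show ∑ p ∈ E, (f p.1 p.2 + if (p.1, p.2) = (i, j) then ε else 0) = _
        rw [Finset.sum_add_distrib]
        congr 1
        simp only [Prod.mk.eta]
        rw [Finset.sum_ite_eq' E (i, j) (fun _ => ε)]
        simp [hij]
      have hcon := hmax f' hfeas'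
      rw [hval] at hcon
      linarith
    -- Key counting identities.
    have key1 : ∑ j ∈ J, I j = ∑ i ∈ Sst, v i := by
      calc ∑ j ∈ J, I j
          = ∑ j ∈ J, ∑ i : S, (if (i, j) ∈ E then f i j else 0) := by
            refine Finset.sum_congr rfl fun j _ => ?_
            show (∑ i ∈ Finset.univ.filter (fun i => (i, j) ∈ E), f i j) = _
            rw [Finset.sum_filter]
        _ = ∑ i : S, ∑ j ∈ J, (if (i, j) ∈ E then f i j else 0) := Finset.sum_comm
        _ = ∑ i ∈ Sst, ∑ j ∈ J, (if (i, j) ∈ E then f i j else 0) := by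
            refine (Finset.sum_subset (Finset.subset_univ _) ?_).symm
            intro i _ hiS
            refine Finset.sum_eq_zero fun j hj => ?_
            have hij : (i, j) ∉ E := fun hij => hiS (hmemS i j hj hij)
            rw [if_neg hij]
        _ = ∑ i ∈ Sst, ∑ j : A, (if (i, j) ∈ E then f i j else 0) := by
            refine Finset.sum_congr rfl fun i hi => ?_
            refine Finset.sum_subset (Finset.subset_univ _) ?_
            intro j _ hjJ
            by_cases hij : (i, j) ∈ E
            · rw [if_pos hij]
              rcases claim1 i hi j hij with h | h
              · exact h
              · exact absurd h hjJ
            · rw [if_neg hij]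
        _ = ∑ i ∈ Sst, v i := by
            refine Finset.sum_congr rfl fun i hi => ?_
            rw [← Finset.sum_filter]
            exact claim2 i hi
    have key2 : ∑ j ∈ J, lam * e j ≤ ∑ i ∈ Sst, v i := by
      have h1 : ∑ j ∈ J, lam * e j
          = ∑ i ∈ Sst, ∑ j ∈ J, (if (i, j) ∈ E then g i j else 0) := by
        calc ∑ j ∈ J, lam * e j
            = ∑ j ∈ J, ∑ i : S, (if (i, j) ∈ E then g i j else 0) := by
              refine Finset.sum_congr rfl fun j _ => ?_
              rw [← Finset.sum_filter, hgin j]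
          _ = ∑ i : S, ∑ j ∈ J, (if (i, j) ∈ E then g i j else 0) := Finset.sum_comm
          _ = ∑ i ∈ Sst, ∑ j ∈ J, (if (i, j) ∈ E then g i j else 0) := by
              refine (Finset.sum_subset (Finset.subset_univ _) ?_).symm
              intro i _ hiS
              refine Finset.sum_eq_zero fun j hj => ?_
              have hij : (i, j) ∉ E := fun hij => hiS (hmemS i j hj hij)
              rw [if_neg hij]
      rw [h1]
      calc ∑ i ∈ Sst, ∑ j ∈ J, (if (i, j) ∈ E then g i j else 0)
          ≤ ∑ i ∈ Sst, ∑ j : A, (if (i, j) ∈ E then g i j else 0) := by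
            refine Finset.sum_le_sum fun i _ => ?_
            refine Finset.sum_le_sum_of_subset_of_nonneg (Finset.subset_univ _) ?_
            intro j _ _
            by_cases hij : (i, j) ∈ E
            · rw [if_pos hij]
              exact hg0 i j hij
            · rw [if_neg hij]
        _ ≤ ∑ i ∈ Sst, v i := by
            refine Finset.sum_le_sum fun i _ => ?_
            rw [← Finset.sum_filter]
            exact hgout i
    have hsum : ∑ j ∈ J, I j = (1 - R) * ∑ j ∈ J, e j := by
      rw [Finset.mul_sum]
      exact Finset.sum_congr rfl fun j hj => hIeq j hj
    have hEpos : 0 < ∑ j ∈ J, e j := Finset.sum_pos (fun j _ => he j) ⟨j0, hj0J⟩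
    have hfin : lam * ∑ j ∈ J, e j ≤ (1 - R) * ∑ j ∈ J, e j := by
      rw [Finset.mul_sum]
      calc ∑ j ∈ J, lam * e j ≤ ∑ i ∈ Sst, v i := key2
        _ = ∑ j ∈ J, I j := key1.symm
        _ = (1 - R) * ∑ j ∈ J, e j := hsum
    exact le_of_mul_le_mul_right hfin hEpos
  -- Assemble.
  have hmem : (1 - R) ∈ {lam : ℝ | lam ∈ Set.Icc (0 : ℝ) 1 ∧ PFeasible E v e lam} :=
    ⟨⟨by linarith, by linarith⟩, partA⟩
  have hub : ∀ x ∈ {lam : ℝ | lam ∈ Set.Icc (0 : ℝ) 1 ∧ PFeasible E v e lam}, x ≤ 1 - R :=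
    fun x hx => partB x hx.1 hx.2
  have h1 : lamStar = 1 - R := by
    rw [hlam]
    exact le_antisymm (csSup_le ⟨1 - R, hmem⟩ hub) (le_csSup ⟨1 - R, hub⟩ hmem)
  rw [h1]
  ring
end
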